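/- If G is a graph with maximum degree Δ(G) ≤ 3, then G is edge-(Δ(G)+1)-group choosable; if Δ(G) = 4, then G is edge-6-group choosable. -/

import Mathlib

open SimpleGraph

set_option linter.unusedSectionVars false
set_option maxHeartbeats 1000000

/-- A graph `H` is `k`-group choosable if for every (additive) Abelian group `A` of order at
least `k`, every list assignment giving each vertex a `k`-element subset of `A`, and every
"forbidden difference" function `f` on oriented edges (encoded as an antisymmetric function
on ordered pairs of vertices, which is equivalent to fixing an orientation), there is a list
coloring `c` with `c x - c y ≠ f x y` for every edge `xy`. -/
def GroupChoosable {W : Type} (H : SimpleGraph W) (k : ℕ) : Prop :=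
  ∀ (A : Type) [AddCommGroup A] [Fintype A], k ≤ Fintype.card A →
    ∀ L : W → Finset A, (∀ v, (L v).card = k) →
      ∀ f : W → W → A, (∀ x y, f x y = - f y x) →
        ∃ c : W → A, (∀ v, c v ∈ L v) ∧ ∀ ⦃x y⦄, H.Adj x y → c x - c y ≠ f x y

/-- The group choice number of a graph: the least `k` such that it is `k`-group choosable. -/
noncomputable def groupChoiceNumber {W : Type} (H : SimpleGraph W) : ℕ :=
  sInf {k | GroupChoosable H k}

/-- `G` is edge-`k`-group choosable if its line graph is `k`-group choosable. -/
def EdgeGroupChoosable {V : Type} (G : SimpleGraph V) (k : ℕ) : Prop :=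
  GroupChoosable G.lineGraph k

/-- The group-choice index of `G`: the group choice number of its line graph. -/
noncomputable def groupChoiceIndex {V : Type} (G : SimpleGraph V) : ℕ :=
  groupChoiceNumber G.lineGraph

open Finset

section Reach

variable {W : Type} [Fintype W] [DecidableEq W] (H : SimpleGraph W)

/-- chains of length n inside t -/
def ChainIn (t : Finset W) : ℕ → W → W → Prop
  | 0, x, y => x = y ∧ x ∈ t
  | (n+1), x, y => x ∈ t ∧ ∃ z ∈ t, H.Adj x z ∧ ChainIn t n z y

def ReachIn (t : Finset W) (x y : W) : Prop := ∃ n, ChainIn H t n x y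

variable {H}

lemma chainIn_left_mem {t n x y} (h : ChainIn H t n x y) : x ∈ t := by
  cases n with
  | zero => exact h.1 ▸ h.2
  | succ n => exact h.1

lemma chainIn_right_mem {t x y} : ∀ {n}, ChainIn H t n x y → y ∈ t := by
  intro n
  induction n generalizing x with
  | zero => rintro ⟨rfl, hx⟩; exact hx
  | succ n ih => rintro ⟨hx, z, hz, hadj, hc⟩; exact ih hc

lemma reachIn_refl {t x} (hx : x ∈ t) : ReachIn H t x x := ⟨0, rfl, hx⟩

lemma reachIn_left_mem {t x y} (h : ReachIn H t x y) : x ∈ t := by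
  obtain ⟨n, hn⟩ := h; exact chainIn_left_mem hn

lemma reachIn_right_mem {t x y} (h : ReachIn H t x y) : y ∈ t := by
  obtain ⟨n, hn⟩ := h; exact chainIn_right_mem hn

lemma chainIn_snoc {t x y z} : ∀ {n}, ChainIn H t n x y → H.Adj y z → z ∈ t →
    ChainIn H t (n+1) x z := by
  intro n
  induction n generalizing x with
  | zero => rintro ⟨rfl, hx⟩ hadj hz; exact ⟨hx, z, hz, hadj, rfl, hz⟩
  | succ n ih =>
    rintro ⟨hx, a, ha, hadj, hc⟩ hyz hz
    exact ⟨hx, a, ha, hadj, ih hc hyz hz⟩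

lemma chainIn_reverse {t x y} : ∀ {n}, ChainIn H t n x y → ChainIn H t n y x := by
  intro n
  induction n generalizing x with
  | zero => rintro ⟨rfl, hx⟩; exact ⟨rfl, hx⟩
  | succ n ih =>
    rintro ⟨hx, z, hz, hadj, hc⟩
    exact chainIn_snoc (ih hc) hadj.symm hx

lemma chainIn_append {t y z} : ∀ {m x}, ChainIn H t m x y → ∀ {n}, ChainIn H t n y z →
    ChainIn H t (m+n) x z := by
  intro m
  induction m with
  | zero => rintro x ⟨rfl, hx⟩ n hn; simpa using hn
  | succ m ih =>
    rintro x ⟨hx, a, ha, hadj, hc⟩ n hn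
    have h2 := ih hc hn
    have he : m + 1 + n = (m + n) + 1 := by omega
    rw [he]
    exact ⟨hx, a, ha, hadj, h2⟩

lemma reachIn_symm {t x y} (h : ReachIn H t x y) : ReachIn H t y x := by
  obtain ⟨n, hn⟩ := h; exact ⟨n, chainIn_reverse hn⟩

lemma reachIn_trans {t x y z} (h : ReachIn H t x y) (h' : ReachIn H t y z) :
    ReachIn H t x z := by
  obtain ⟨n, hn⟩ := h; obtain ⟨m, hm⟩ := h'; exact ⟨n + m, chainIn_append hn hm⟩

lemma chainIn_mono {t t' : Finset W} (hst : t ⊆ t') {x y} : ∀ {n}, ChainIn H t n x y →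
    ChainIn H t' n x y := by
  intro n
  induction n generalizing x with
  | zero => rintro ⟨rfl, hx⟩; exact ⟨rfl, hst hx⟩
  | succ n ih => rintro ⟨hx, z, hz, hadj, hc⟩; exact ⟨hst hx, z, hst hz, hadj, ih hc⟩

lemma reachIn_mono {t t' : Finset W} (hst : t ⊆ t') {x y} (h : ReachIn H t x y) :
    ReachIn H t' x y := by
  obtain ⟨n, hn⟩ := h; exact ⟨n, chainIn_mono hst hn⟩

lemma reachIn_step {t x y} (hx : x ∈ t) (hy : y ∈ t) (hadj : H.Adj x y) :
    ReachIn H t x y := ⟨1, hx, y, hy, hadj, rfl, hy⟩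

noncomputable def distIn (t : Finset W) (x y : W) : ℕ := sInf {n | ChainIn H (t := t) n x y}

lemma chainIn_distIn {t x y} (h : ReachIn H t x y) :
    ChainIn H t (distIn (H := H) t x y) x y := Nat.sInf_mem h

lemma distIn_le {t x y n} (h : ChainIn H t n x y) : distIn (H := H) t x y ≤ n :=
  Nat.sInf_le h

lemma distIn_pos {t x y} (h : ReachIn H t x y) (hxy : x ≠ y) :
    0 < distIn (H := H) t x y := by
  rcases Nat.eq_zero_or_pos (distIn (H := H) t x y) with h0 | h1
  · exfalso; have := chainIn_distIn h; rw [h0] at this; exact hxy this.1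
  · exact h1

lemma exists_parent {t x y} (h : ReachIn H t x y) (hxy : x ≠ y) :
    ∃ z ∈ t, H.Adj x z ∧ ReachIn H t z y ∧
      distIn (H := H) t z y < distIn (H := H) t x y := by
  have hc := chainIn_distIn h
  have hpos := distIn_pos h hxy
  obtain ⟨m, hm⟩ := Nat.exists_eq_succ_of_ne_zero hpos.ne'
  rw [hm] at hc
  obtain ⟨hx, z, hz, hadj, hcz⟩ := hc
  exact ⟨z, hz, hadj, ⟨m, hcz⟩, by calc distIn (H := H) t z y ≤ m := distIn_le hcz
    _ < m + 1 := Nat.lt_succ_self m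
    _ = _ := hm.symm⟩

/-- walks to x2 can avoid D if edges into D come only from D or x2 -/
lemma reach_avoid {t D : Finset W} {x2 : W} (hx2D : x2 ∉ D)
    (hD : ∀ a ∈ t, ∀ b ∈ t, H.Adj a b → b ∈ D → a ∈ D ∨ a = x2) :
    ∀ {n x}, ChainIn H t n x x2 → x ∉ D → ReachIn H (t \ D) x x2 := by
  intro n
  induction n with
  | zero => rintro x ⟨rfl, hx⟩ hxD; exact reachIn_refl (by simp [hx, hxD])
  | succ n ih =>
    rintro x ⟨hx, z, hz, hadj, hc⟩ hxD
    by_cases hzD : z ∈ D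
    · rcases hD x hx z hz hadj hzD with h | h
      · exact absurd h hxD
      · subst h; exact reachIn_refl (by simp [hx, hxD])
    · exact reachIn_trans (reachIn_step (by simp [hx, hxD]) (by simp [hz, hzD]) hadj) (ih hc hzD)

def ConnOn (H : SimpleGraph W) (t : Finset W) : Prop := ∀ x ∈ t, ∀ y ∈ t, ReachIn H t x y

def degOn (H : SimpleGraph W) [DecidableRel H.Adj] (t : Finset W) (v : W) : ℕ :=
  (t.filter (fun y => H.Adj v y)).card

end Reach

section Greedy

variable {W : Type} [Fintype W] [DecidableEq W] (H : SimpleGraph W) [DecidableRel H.Adj]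
variable {A : Type} [AddCommGroup A] [DecidableEq A] [Nonempty A] (f : W → W → A)

noncomputable def greedy (s : Finset W) (L : W → Finset A) (r : W → ℕ) : W → A
  | v =>
    if h : (L v \ ((s.filter (fun y => H.Adj v y ∧ r y < r v)).attach).image
        (fun y => greedy s L r y.1 + f v y.1)).Nonempty then h.choose
    else Classical.arbitrary A
  termination_by v => r v
  decreasing_by
    all_goals exact (Finset.mem_filter.mp y.2).2.2

theorem greedy_good (s : Finset W) (L : W → Finset A) (r : W → ℕ)
    (Hyp : ∀ v ∈ s, ∀ c : W → A, (∀ y ∈ s, r y < r v → c y ∈ L y) →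
      ((L v).filter (fun a => ∀ y ∈ s, H.Adj v y → r y < r v → a ≠ c y + f v y)).Nonempty) :
    ∀ v ∈ s, greedy H f s L r v ∈ L v ∧
      ∀ y ∈ s, H.Adj v y → r y < r v →
        greedy H f s L r v ≠ greedy H f s L r y + f v y := by
  let c := greedy H f s L r
  show ∀ v ∈ s, c v ∈ L v ∧ ∀ y ∈ s, H.Adj v y → r y < r v → c v ≠ c y + f v y
  have key : ∀ N v, r v < N → v ∈ s → c v ∈ L v ∧
      ∀ y ∈ s, H.Adj v y → r y < r v → c v ≠ c y + f v y := by
    intro N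
    induction N with
    | zero => intro v hv; omega
    | succ N ih =>
      intro v hrv hv
      have hmem : ∀ y ∈ s, r y < r v → c y ∈ L y := by
        intro y hy hlt
        exact (ih y (by omega) hy).1
      have hne := Hyp v hv c hmem
      obtain ⟨a, ha⟩ := hne
      rw [Finset.mem_filter] at ha
      have hnon : (L v \ ((s.filter (fun y => H.Adj v y ∧ r y < r v)).attach).image
          (fun y => c y.1 + f v y.1)).Nonempty := by
        refine ⟨a, Finset.mem_sdiff.mpr ⟨ha.1, ?_⟩⟩
        intro hmem'
        obtain ⟨y, hy, hval⟩ := Finset.mem_image.mp hmem'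
        have hy' := Finset.mem_filter.mp y.2
        exact ha.2 y.1 hy'.1 hy'.2.1 hy'.2.2 hval.symm
      have hunf : greedy H f s L r v = if h : (L v \ ((s.filter
          (fun y => H.Adj v y ∧ r y < r v)).attach).image
          (fun y => greedy H f s L r y.1 + f v y.1)).Nonempty then h.choose
          else Classical.arbitrary A := by
        rw [greedy]
      have hcv : c v = hnon.choose := by
        show greedy H f s L r v = hnon.choose
        rw [hunf, dif_pos hnon]
      have hspec := hnon.choose_spec
      rw [← hcv] at hspec
      rw [Finset.mem_sdiff] at hspec
      refine ⟨hspec.1, ?_⟩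
      intro y hy hadj hlt heq
      apply hspec.2
      apply Finset.mem_image.mpr
      refine ⟨⟨y, Finset.mem_filter.mpr ⟨hy, hadj, hlt⟩⟩, Finset.mem_attach _ _, heq.symm⟩
  intro v hv
  exact key (r v + 1) v (by omega) hv

theorem greedy_coloring (s : Finset W) (L : W → Finset A) (r : W → ℕ)
    (hinj : Set.InjOn r s) (hf : ∀ x y, f x y = - f y x)
    (Hyp : ∀ v ∈ s, ∀ c : W → A, (∀ y ∈ s, r y < r v → c y ∈ L y) →
      ((L v).filter (fun a => ∀ y ∈ s, H.Adj v y → r y < r v → a ≠ c y + f v y)).Nonempty) :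
    ∃ c : W → A, (∀ v ∈ s, c v ∈ L v) ∧
      ∀ v ∈ s, ∀ y ∈ s, H.Adj v y → c v - c y ≠ f v y := by
  have h := greedy_good H f s L r Hyp
  refine ⟨greedy H f s L r, fun v hv => (h v hv).1, ?_⟩
  intro v hv y hy hadj heq
  have hne : v ≠ y := hadj.ne
  have hrne : r v ≠ r y := fun hr => hne (hinj hv hy hr)
  rcases Nat.lt_or_ge (r y) (r v) with hlt | hge
  · exact (h v hv).2 y hy hadj hlt (by have h3 := eq_add_of_sub_eq heq; rwa [add_comm] at h3)
  · have hlt : r v < r y := by omega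
    have h2 : greedy H f s L r y - greedy H f s L r v = f y v := by
      rw [hf y v, ← heq]; abel
    exact (h y hy).2 v hv hadj.symm hlt (by have h3 := eq_add_of_sub_eq h2; rwa [add_comm] at h3)

end Greedy

section Rank

variable {W : Type} [Fintype W] [DecidableEq W] {H : SimpleGraph W} [DecidableRel H.Adj]
variable {A : Type} [AddCommGroup A] [DecidableEq A] [Nonempty A] {f : W → W → A}

lemma card_filter_avoid (L : Finset A) (T : Finset W) (g : W → A) :
    L.card ≤ T.card + (L.filter (fun a => ∀ y ∈ T, a ≠ g y)).card := by
  have hsub : L ⊆ (T.image g) ∪ (L.filter (fun a => ∀ y ∈ T, a ≠ g y)) := by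
    intro a ha
    by_cases h : ∀ y ∈ T, a ≠ g y
    · exact Finset.mem_union_right _ (Finset.mem_filter.mpr ⟨ha, h⟩)
    · push_neg at h
      obtain ⟨y, hy, hval⟩ := h
      exact Finset.mem_union_left _ (Finset.mem_image.mpr ⟨y, hy, hval.symm⟩)
  calc L.card ≤ ((T.image g) ∪ _).card := Finset.card_le_card hsub
    _ ≤ (T.image g).card + _ := Finset.card_union_le _ _
    _ ≤ T.card + _ := by gcongr; exact Finset.card_image_le

/-- a rank function on a connected set, increasing towards v0 -/
theorem peel : ∀ (s : Finset W) (v0 : W), v0 ∈ s →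
    (∀ y ∈ s, ReachIn H s y v0) →
    ∃ r : W → ℕ, Set.InjOn r s ∧
      (∀ y ∈ s, y ≠ v0 → ∃ z ∈ s, H.Adj y z ∧ r y < r z) ∧
      (∀ y ∈ s, y ≠ v0 → r y < r v0) := by
  intro s
  induction s using Finset.strongInduction with
  | _ s ih =>
    intro v0 hv0 hconn
    by_cases hse : s.erase v0 = ∅
    · refine ⟨fun _ => 0, ?_, ?_, ?_⟩
      · intro a ha b hb _
        have ha' : a = v0 := by
          by_contra hne
          exact absurd (Finset.mem_erase.mpr ⟨hne, ha⟩) (by simp [hse])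
        have hb' : b = v0 := by
          by_contra hne
          exact absurd (Finset.mem_erase.mpr ⟨hne, hb⟩) (by simp [hse])
        rw [ha', hb']
      · intro y hy hne
        exact absurd (Finset.mem_erase.mpr ⟨hne, hy⟩) (by simp [hse])
      · intro y hy hne
        exact absurd (Finset.mem_erase.mpr ⟨hne, hy⟩) (by simp [hse])
    · obtain ⟨u, hu, hmax⟩ := Finset.exists_max_image (s.erase v0)
        (fun y => distIn (H := H) s y v0) (Finset.nonempty_of_ne_empty hse)
      have huve : u ≠ v0 := (Finset.mem_erase.mp hu).1
      have hus : u ∈ s := (Finset.mem_erase.mp hu).2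
      -- every vertex reaches v0 avoiding u
      have claimA : ∀ n, ∀ x ∈ s, x ≠ u → ChainIn H s n x v0 →
          n ≤ distIn (H := H) s u v0 → ReachIn H (s.erase u) x v0 := by
        intro n
        induction n with
        | zero =>
          rintro x hx hxu ⟨rfl, _⟩ _
          exact reachIn_refl (Finset.mem_erase.mpr ⟨Ne.symm huve, hv0⟩)
        | succ n ihn =>
          rintro x hx hxu ⟨hx', z, hz, hadj, hcz⟩ hle
          by_cases hzu : z = u
          · subst hzu
            have : distIn (H := H) s z v0 ≤ n := distIn_le hcz
            omega
          · exact reachIn_trans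
              (reachIn_step (Finset.mem_erase.mpr ⟨hxu, hx⟩) (Finset.mem_erase.mpr ⟨hzu, hz⟩) hadj)
              (ihn z hz hzu hcz (by omega))
      have hconn' : ∀ y ∈ s.erase u, ReachIn H (s.erase u) y v0 := by
        intro y hy
        have hys := (Finset.mem_erase.mp hy).2
        have hyu := (Finset.mem_erase.mp hy).1
        refine claimA (distIn (H := H) s y v0) y hys hyu (chainIn_distIn (hconn y hys)) ?_
        by_cases hyv : y = v0
        · rw [hyv]
          have h0 : distIn (H := H) s v0 v0 ≤ 0 := distIn_le ⟨rfl, hv0⟩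
          omega
        · exact hmax y (Finset.mem_erase.mpr ⟨hyv, hys⟩)
      obtain ⟨r', hinj', hup', hmax'⟩ := ih (s.erase u) (Finset.erase_ssubset hus) v0
        (Finset.mem_erase.mpr ⟨Ne.symm huve, hv0⟩) hconn'
      -- parent of u
      obtain ⟨z, hz, hadjz, _, _⟩ := exists_parent (hconn u hus) huve
      have hzu : z ≠ u := hadjz.ne'
      refine ⟨fun y => if y = u then 0 else r' y + 1, ?_, ?_, ?_⟩
      · intro a ha b hb hab
        simp only at hab
        by_cases hau : a = u <;> by_cases hbu : b = u
        · rw [hau, hbu]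
        · rw [if_pos hau, if_neg hbu] at hab; omega
        · rw [if_neg hau, if_pos hbu] at hab; omega
        · rw [if_neg hau, if_neg hbu] at hab
          exact hinj' (Finset.mem_erase.mpr ⟨hau, ha⟩) (Finset.mem_erase.mpr ⟨hbu, hb⟩)
            (by omega)
      · intro y hy hyv
        by_cases hyu : y = u
        · refine ⟨z, hz, hyu ▸ hadjz, ?_⟩
          show (if y = u then 0 else r' y + 1) < (if z = u then 0 else r' z + 1)
          rw [if_pos hyu, if_neg hzu]
          omega
        · obtain ⟨z', hz', hadj', hlt'⟩ := hup' y (Finset.mem_erase.mpr ⟨hyu, hy⟩) hyv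
          have hz'u : z' ≠ u := (Finset.mem_erase.mp hz').1
          refine ⟨z', (Finset.mem_erase.mp hz').2, hadj', ?_⟩
          show (if y = u then 0 else r' y + 1) < (if z' = u then 0 else r' z' + 1)
          rw [if_neg hyu, if_neg hz'u]
          omega
      · intro y hy hyv
        have hvu : ¬ v0 = u := fun h => huve h.symm
        by_cases hyu : y = u
        · show (if y = u then 0 else r' y + 1) < (if v0 = u then 0 else r' v0 + 1)
          rw [if_pos hyu, if_neg hvu]
          omega
        · have hlt := hmax' y (Finset.mem_erase.mpr ⟨hyu, hy⟩) hyv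
          show (if y = u then 0 else r' y + 1) < (if v0 = u then 0 else r' v0 + 1)
          rw [if_neg hyu, if_neg hvu]
          omega

end Rank

section Color

variable {W : Type} [Fintype W] [DecidableEq W] {H : SimpleGraph W} [DecidableRel H.Adj]
variable {A : Type} [AddCommGroup A] [DecidableEq A] [Nonempty A] {f : W → W → A}

lemma avail (Lv : Finset A) (T : Finset W) (g : W → A) (hT : T.card < Lv.card) :
    ∃ x ∈ Lv, ∀ y ∈ T, x ≠ g y := by
  have h1 := card_filter_avoid Lv T g
  have h2 : 0 < (Lv.filter (fun a => ∀ y ∈ T, a ≠ g y)).card := by omega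
  obtain ⟨x, hx⟩ := Finset.card_pos.mp h2
  exact ⟨x, (Finset.mem_filter.mp hx).1, (Finset.mem_filter.mp hx).2⟩

/-- greedy coloring towards a vertex with slack -/
theorem colorG1 (hf : ∀ x y, f x y = - f y x) (s : Finset W) (L : W → Finset A) (v0 : W)
    (hv0 : v0 ∈ s) (hconn : ∀ y ∈ s, ReachIn H s y v0)
    (hdeg : ∀ y ∈ s, degOn H s y ≤ (L y).card)
    (hslack : degOn H s v0 < (L v0).card) :
    ∃ c : W → A, (∀ v ∈ s, c v ∈ L v) ∧
      ∀ v ∈ s, ∀ y ∈ s, H.Adj v y → c v - c y ≠ f v y := by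
  obtain ⟨r, hinj, hup, hmax⟩ := peel s v0 hv0 hconn
  apply greedy_coloring H f s L r hinj hf
  intro v hv c _
  by_cases hvv0 : v = v0
  · obtain ⟨x, hxL, hav⟩ := avail (L v) (s.filter (fun y => H.Adj v y))
      (fun y => c y + f v y) (by rw [hvv0]; exact hslack)
    refine ⟨x, Finset.mem_filter.mpr ⟨hxL, ?_⟩⟩
    intro y hy hadj _
    exact hav y (Finset.mem_filter.mpr ⟨hy, hadj⟩)
  · obtain ⟨z, hzs, hadjz, hrz⟩ := hup v hv hvv0
    have hzmem : z ∈ s.filter (fun y => H.Adj v y) := Finset.mem_filter.mpr ⟨hzs, hadjz⟩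
    have hdegv : 1 ≤ (s.filter (fun y => H.Adj v y)).card := Finset.card_pos.mpr ⟨z, hzmem⟩
    have hcardT : ((s.filter (fun y => H.Adj v y)).erase z).card < (L v).card := by
      rw [Finset.card_erase_of_mem hzmem]
      have h1 := hdeg v hv
      unfold degOn at h1
      omega
    obtain ⟨x, hxL, hav⟩ := avail (L v) ((s.filter (fun y => H.Adj v y)).erase z)
      (fun y => c y + f v y) hcardT
    refine ⟨x, Finset.mem_filter.mpr ⟨hxL, ?_⟩⟩
    intro y hy hadj hlt
    refine hav y (Finset.mem_erase.mpr ⟨?_, Finset.mem_filter.mpr ⟨hy, hadj⟩⟩)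
    intro hyz
    rw [hyz] at hlt
    omega

/-- coloring with an exchange pair u,w for the final vertex v0 -/
theorem colorEXCH (hf : ∀ x y, f x y = - f y x) (s : Finset W) (L : W → Finset A)
    (u w v0 : W) (hus : u ∈ s) (hws : w ∈ s) (hv0s : v0 ∈ s)
    (huw : u ≠ w) (hadju : H.Adj v0 u) (hadjw : H.Adj v0 w) (hnadj : ¬ H.Adj u w)
    (hconn : ∀ y ∈ (s.erase u).erase w, ReachIn H ((s.erase u).erase w) y v0)
    (hdeg : ∀ y ∈ s, degOn H s y ≤ (L y).card)
    (hcard : (L v0).card < (L u).card + (L w).card) :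
    ∃ c : W → A, (∀ v ∈ s, c v ∈ L v) ∧
      ∀ v ∈ s, ∀ y ∈ s, H.Adj v y → c v - c y ≠ f v y := by
  have hv0u : v0 ≠ u := hadju.ne
  have hv0w : v0 ≠ w := hadjw.ne
  have hLu : (L u).Nonempty := by
    rw [← Finset.card_pos]
    have h1 : v0 ∈ s.filter (fun y => H.Adj u y) := Finset.mem_filter.mpr ⟨hv0s, hadju.symm⟩
    have h2 := Finset.card_pos.mpr ⟨v0, h1⟩
    have := hdeg u hus
    unfold degOn at this
    omega
  have hLw : (L w).Nonempty := by
    rw [← Finset.card_pos]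
    have h1 : w ∈ s.filter (fun y => H.Adj v0 y) := Finset.mem_filter.mpr ⟨hws, hadjw⟩
    have h2 : v0 ∈ s.filter (fun y => H.Adj w y) := Finset.mem_filter.mpr ⟨hv0s, hadjw.symm⟩
    have h3 := Finset.card_pos.mpr ⟨v0, h2⟩
    have := hdeg w hws
    unfold degOn at this
    omega
  -- find the exchange pair
  have hpair : ∃ a ∈ L u, ∃ b ∈ L w,
      a + f v0 u = b + f v0 w ∨ a + f v0 u ∉ L v0 ∨ b + f v0 w ∉ L v0 := by
    by_contra hcon
    push_neg at hcon
    obtain ⟨a0, ha0⟩ := hLu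
    obtain ⟨b0, hb0⟩ := hLw
    have hIu : (L u).image (fun x => x + f v0 u) ⊆ L v0 := by
      intro x hx
      obtain ⟨a, ha, rfl⟩ := Finset.mem_image.mp hx
      exact (hcon a ha b0 hb0).2.1
    have hIw : (L w).image (fun x => x + f v0 w) ⊆ L v0 := by
      intro x hx
      obtain ⟨b, hb, rfl⟩ := Finset.mem_image.mp hx
      exact (hcon a0 ha0 b hb).2.2
    have hdisj : Disjoint ((L u).image (fun x => x + f v0 u))
        ((L w).image (fun x => x + f v0 w)) := by
      rw [Finset.disjoint_left]
      intro x hxu hxw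
      obtain ⟨a, ha, rfl⟩ := Finset.mem_image.mp hxu
      obtain ⟨b, hb, hbe⟩ := Finset.mem_image.mp hxw
      exact (hcon a ha b hb).1 hbe.symm
    have hinj1 : Function.Injective (fun x : A => x + f v0 u) := add_left_injective _
    have hinj2 : Function.Injective (fun x : A => x + f v0 w) := add_left_injective _
    have hle : (L u).card + (L w).card ≤ (L v0).card := by
      rw [← Finset.card_image_of_injective (L u) hinj1,
        ← Finset.card_image_of_injective (L w) hinj2,
        ← Finset.card_union_of_disjoint hdisj]
      exact Finset.card_le_card (Finset.union_subset hIu hIw)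
    omega
  obtain ⟨a, ha, b, hb, hor⟩ := hpair
  set L' : W → Finset A := Function.update (Function.update L u {a}) w {b} with hL'
  have hL'u : L' u = {a} := by
    rw [hL', Function.update_of_ne huw, Function.update_self]
  have hL'w : L' w = {b} := by rw [hL', Function.update_self]
  have hL'other : ∀ y, y ≠ u → y ≠ w → L' y = L y := by
    intro y hyu hyw
    rw [hL', Function.update_of_ne hyw, Function.update_of_ne hyu]
  have hut : v0 ∈ (s.erase u).erase w :=
    Finset.mem_erase.mpr ⟨hv0w, Finset.mem_erase.mpr ⟨hv0u, hv0s⟩⟩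
  obtain ⟨r', hinj', hup', hmax'⟩ := peel ((s.erase u).erase w) v0 hut hconn
  set r : W → ℕ := fun y => if y = u then 0 else if y = w then 1 else r' y + 2 with hr
  have hrt : ∀ y, y ≠ u → y ≠ w → r y = r' y + 2 := by
    intro y h1 h2; rw [hr]; simp [h1, h2]
  have hinj : Set.InjOn r s := by
    intro p hp q hq hpq
    have hp' : p ∈ s := hp
    have hq' : q ∈ s := hq
    simp only [hr] at hpq
    by_cases hpu : p = u <;> by_cases hqu : q = u
    · rw [hpu, hqu]
    · exfalso; rw [if_pos hpu, if_neg hqu] at hpq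
      by_cases hqw : q = w
      · rw [if_pos hqw] at hpq; omega
      · rw [if_neg hqw] at hpq; omega
    · exfalso; rw [if_neg hpu, if_pos hqu] at hpq
      by_cases hpw : p = w
      · rw [if_pos hpw] at hpq; omega
      · rw [if_neg hpw] at hpq; omega
    · rw [if_neg hpu, if_neg hqu] at hpq
      by_cases hpw : p = w <;> by_cases hqw : q = w
      · rw [hpw, hqw]
      · exfalso; rw [if_pos hpw, if_neg hqw] at hpq; omega
      · exfalso; rw [if_neg hpw, if_pos hqw] at hpq; omega
      · rw [if_neg hpw, if_neg hqw] at hpq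
        exact hinj' (Finset.mem_erase.mpr ⟨hpw, Finset.mem_erase.mpr ⟨hpu, hp'⟩⟩)
          (Finset.mem_erase.mpr ⟨hqw, Finset.mem_erase.mpr ⟨hqu, hq'⟩⟩) (by omega)
  have hcmem : ∃ c : W → A, (∀ v ∈ s, c v ∈ L' v) ∧
      ∀ v ∈ s, ∀ y ∈ s, H.Adj v y → c v - c y ≠ f v y := by
    apply greedy_coloring H f s L' r hinj hf
    intro v hv c hc
    by_cases hvu : v = u
    · refine ⟨a, Finset.mem_filter.mpr ⟨by rw [hvu, hL'u]; exact Finset.mem_singleton_self a, ?_⟩⟩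
      intro y _ _ hlt
      exfalso
      have h0 : r v = 0 := by rw [hr]; simp [hvu]
      omega
    · by_cases hvw : v = w
      · have hvu' : ¬ v = u := fun h => huw (h.symm.trans hvw)
        refine ⟨b, Finset.mem_filter.mpr ⟨by rw [hvw, hL'w]; exact Finset.mem_singleton_self b, ?_⟩⟩
        intro y hy hadj hlt
        exfalso
        have hrv : r v = 1 := by
          show (if v = u then 0 else if v = w then 1 else r' v + 2) = 1
          rw [if_neg hvu', if_pos hvw]
        have hry : r y = 0 := by omega
        have hyu : y = u := by
          by_contra hne
          by_cases hyw : y = w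
          · have : r y = 1 := by
              show (if y = u then 0 else if y = w then 1 else r' y + 2) = 1
              rw [if_neg hne, if_pos hyw]
            omega
          · rw [hrt y hne hyw] at hry; omega
        rw [hyu, hvw] at hadj
        exact hnadj hadj.symm
      · by_cases hvv0 : v = v0
        · subst hvv0
          -- the exchange vertex (note: `v0` has been replaced by `v`)
          have hcu : c u = a := by
            have h1 : r u < r v := by
              rw [hr]; simp [hv0u, hv0w]
            have := hc u hus h1
            rw [hL'u] at this
            exact Finset.mem_singleton.mp this
          have hcw : c w = b := by
            have h1 : r w < r v := by
              rw [hr]; simp [hv0u, hv0w, huw.symm]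
            have := hc w hws h1
            rw [hL'w] at this
            exact Finset.mem_singleton.mp this
          have hLv0 : L' v = L v := hL'other v hv0u hv0w
          have humem : u ∈ s.filter (fun y => H.Adj v y) := Finset.mem_filter.mpr ⟨hus, hadju⟩
          have hwmem : w ∈ (s.filter (fun y => H.Adj v y)).erase u :=
            Finset.mem_erase.mpr ⟨huw.symm, Finset.mem_filter.mpr ⟨hws, hadjw⟩⟩
          set T' := ((s.filter (fun y => H.Adj v y)).erase u).erase w with hT'
          have hT'card : T'.card + 2 = degOn H s v := by
            rw [hT', Finset.card_erase_of_mem hwmem, Finset.card_erase_of_mem humem]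
            have h1 := Finset.card_pos.mpr ⟨u, humem⟩
            have h2 := Finset.card_pos.mpr ⟨w, hwmem⟩
            have h3 := Finset.card_erase_of_mem humem
            unfold degOn
            omega
          have hdegv := hdeg v hv0s
          have hT'mem : ∀ y ∈ s, H.Adj v y → y ≠ u → y ≠ w → y ∈ T' := by
            intro y hy hadj h1 h2
            exact Finset.mem_erase.mpr ⟨h2, Finset.mem_erase.mpr ⟨h1, Finset.mem_filter.mpr ⟨hy, hadj⟩⟩⟩
          rcases hor with hco | hea | heb
          · -- coincide
            obtain ⟨x, hxL, hav⟩ := avail (L v) (insert u T') (fun y => c y + f v y)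
              (by
                have := Finset.card_insert_le u T'
                omega)
            refine ⟨x, Finset.mem_filter.mpr ⟨by rw [hLv0]; exact hxL, ?_⟩⟩
            intro y hy hadj _
            by_cases hyu : y = u
            · rw [hyu]; exact hav u (Finset.mem_insert_self _ _)
            · by_cases hyw : y = w
              · rw [hyw]
                have : c w + f v w = c u + f v u := by rw [hcu, hcw, hco]
                rw [this]
                exact hav u (Finset.mem_insert_self _ _)
              · exact hav y (Finset.mem_insert_of_mem (hT'mem y hy hadj hyu hyw))
          · -- escape at u
            obtain ⟨x, hxL, hav⟩ := avail (L v) (insert w T') (fun y => c y + f v y)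
              (by
                have := Finset.card_insert_le w T'
                omega)
            refine ⟨x, Finset.mem_filter.mpr ⟨by rw [hLv0]; exact hxL, ?_⟩⟩
            intro y hy hadj _
            by_cases hyu : y = u
            · rw [hyu, hcu]
              intro hxe
              rw [hxe] at hxL
              exact hea hxL
            · by_cases hyw : y = w
              · rw [hyw]; exact hav w (Finset.mem_insert_self _ _)
              · exact hav y (Finset.mem_insert_of_mem (hT'mem y hy hadj hyu hyw))
          · -- escape at w
            obtain ⟨x, hxL, hav⟩ := avail (L v) (insert u T') (fun y => c y + f v y)
              (by
                have := Finset.card_insert_le u T'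
                omega)
            refine ⟨x, Finset.mem_filter.mpr ⟨by rw [hLv0]; exact hxL, ?_⟩⟩
            intro y hy hadj _
            by_cases hyu : y = u
            · rw [hyu]; exact hav u (Finset.mem_insert_self _ _)
            · by_cases hyw : y = w
              · rw [hyw, hcw]
                intro hxe
                rw [hxe] at hxL
                exact heb hxL
              · exact hav y (Finset.mem_insert_of_mem (hT'mem y hy hadj hyu hyw))
        · -- middle vertex
          obtain ⟨z, hzt, hadjz, hrz'⟩ := hup' v
            (Finset.mem_erase.mpr ⟨hvw, Finset.mem_erase.mpr ⟨hvu, hv⟩⟩) hvv0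
          have hzw : z ≠ w := (Finset.mem_erase.mp hzt).1
          have hzu : z ≠ u := (Finset.mem_erase.mp (Finset.mem_erase.mp hzt).2).1
          have hzs : z ∈ s := (Finset.mem_erase.mp (Finset.mem_erase.mp hzt).2).2
          have hrz : r v < r z := by
            rw [hrt v hvu hvw, hrt z hzu hzw]; omega
          have hzmem : z ∈ s.filter (fun y => H.Adj v y) := Finset.mem_filter.mpr ⟨hzs, hadjz⟩
          have hLv : L' v = L v := hL'other v hvu hvw
          have hcardT : ((s.filter (fun y => H.Adj v y)).erase z).card < (L v).card := by
            rw [Finset.card_erase_of_mem hzmem]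
            have h1 := hdeg v hv
            have h2 := Finset.card_pos.mpr ⟨z, hzmem⟩
            unfold degOn at h1
            omega
          obtain ⟨x, hxL, hav⟩ := avail (L v) ((s.filter (fun y => H.Adj v y)).erase z)
            (fun y => c y + f v y) hcardT
          refine ⟨x, Finset.mem_filter.mpr ⟨by rw [hLv]; exact hxL, ?_⟩⟩
          intro y hy hadj hlt
          refine hav y (Finset.mem_erase.mpr ⟨?_, Finset.mem_filter.mpr ⟨hy, hadj⟩⟩)
          intro hyz
          rw [hyz] at hlt
          omega
  obtain ⟨c, hcL, hcp⟩ := hcmem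
  refine ⟨c, ?_, hcp⟩
  intro v hv
  by_cases hvu : v = u
  · subst hvu
    have := hcL v hv
    rw [hL'u] at this
    rw [Finset.mem_singleton.mp this]
    exact ha
  · by_cases hvw : v = w
    · subst hvw
      have := hcL v hv
      rw [hL'w] at this
      rw [Finset.mem_singleton.mp this]
      exact hb
    · have := hcL v hv
      rwa [hL'other v hvu hvw] at this

end Color

section Components

variable {W : Type} [Fintype W] [DecidableEq W] {H : SimpleGraph W} [DecidableRel H.Adj]

noncomputable instance reachInDecidable (H : SimpleGraph W) (t : Finset W) (a : W) :
    DecidablePred (fun y => ReachIn H t a y) := Classical.decPred _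

/-- the connected component of `a` inside `t` -/
noncomputable def Cmp (H : SimpleGraph W) [DecidableRel H.Adj] (t : Finset W) (a : W) :
    Finset W :=
  t.filter (fun y => ReachIn H t a y)

lemma mem_Cmp {t : Finset W} {a y : W} : y ∈ Cmp H t a ↔ y ∈ t ∧ ReachIn H t a y := by
  unfold Cmp
  exact Finset.mem_filter

lemma Cmp_subset {t : Finset W} {a : W} : Cmp H t a ⊆ t := by
  unfold Cmp
  exact Finset.filter_subset _ _

lemma self_mem_Cmp {t : Finset W} {a : W} (ha : a ∈ t) : a ∈ Cmp H t a :=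
  mem_Cmp.mpr ⟨ha, reachIn_refl ha⟩

lemma Cmp_closed {t : Finset W} {a y q : W} (hy : y ∈ Cmp H t a) (hq : q ∈ t)
    (hadj : H.Adj y q) : q ∈ Cmp H t a := by
  rw [mem_Cmp] at hy ⊢
  exact ⟨hq, reachIn_trans hy.2 (reachIn_step (hy.1) hq hadj)⟩

lemma chain_stay {T E : Finset W} (hcl : ∀ p ∈ E, ∀ q ∈ T, H.Adj p q → q ∈ E) :
    ∀ {n x y}, ChainIn H T n x y → x ∈ E → y ∈ E := by
  intro n
  induction n with
  | zero => rintro x y ⟨rfl, _⟩ hx; exact hx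
  | succ n ih =>
    rintro x y ⟨hx, z, hz, hadj, hc⟩ hxE
    exact ih hc (hcl x hxE z hz hadj)

lemma chainIn_Cmp {t : Finset W} {a : W} :
    ∀ {n x y}, ChainIn H t n x y → x ∈ Cmp H t a → ChainIn H (Cmp H t a) n x y := by
  intro n
  induction n with
  | zero => rintro x y ⟨rfl, _⟩ hx; exact ⟨rfl, hx⟩
  | succ n ih =>
    rintro x y ⟨hx, z, hz, hadj, hc⟩ hxC
    have hzC : z ∈ Cmp H t a := Cmp_closed hxC hz hadj
    exact ⟨hxC, z, hzC, hadj, ih hc hzC⟩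

lemma reachIn_Cmp {t : Finset W} {a y : W} (hy : y ∈ Cmp H t a) (ha : a ∈ t) :
    ReachIn H (Cmp H t a) a y := by
  obtain ⟨n, hn⟩ := (mem_Cmp.mp hy).2
  exact ⟨n, chainIn_Cmp hn (self_mem_Cmp ha)⟩

lemma connOn_Cmp {t : Finset W} {a : W} (ha : a ∈ t) : ConnOn H (Cmp H t a) := by
  intro p hp q hq
  exact reachIn_trans (reachIn_symm (reachIn_Cmp hp ha)) (reachIn_Cmp hq ha)

/-- last step: if x reaches z' in s then some neighbor y of z' is reachable avoiding z' -/
lemma laststep {s : Finset W} {z' : W} :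
    ∀ {n x}, ChainIn H s n x z' → x ≠ z' →
      ∃ y, H.Adj z' y ∧ ReachIn H (s.erase z') x y := by
  intro n
  induction n with
  | zero => rintro x ⟨rfl, _⟩ hne; exact absurd rfl hne
  | succ n ih =>
    rintro x ⟨hx, z, hz, hadj, hc⟩ hne
    by_cases hzz : z = z'
    · exact ⟨x, by rw [← hzz]; exact hadj.symm,
        reachIn_refl (Finset.mem_erase.mpr ⟨hne, hx⟩)⟩
    · obtain ⟨y, hy1, hy2⟩ := ih hc hzz
      exact ⟨y, hy1, reachIn_trans
        (reachIn_step (Finset.mem_erase.mpr ⟨hne, hx⟩) (Finset.mem_erase.mpr ⟨hzz, hz⟩) hadj)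
        hy2⟩

/-- exiting a closed region happens at the attachment vertex -/
lemma exitD {t D : Finset W} {x2 g : W}
    (hD : ∀ a ∈ t, ∀ b ∈ t, H.Adj a b → b ∈ D → a ∈ D ∨ a = x2) (hg : g ∉ D) :
    ∀ n, ∀ z ∈ D, ChainIn H t n z g → ∃ m < n, ChainIn H t m x2 g := by
  intro n
  induction n with
  | zero => rintro z hzD ⟨rfl, _⟩; exact absurd hzD hg
  | succ n ih =>
    rintro z hzD ⟨hz, z', hz', hadj, hc⟩
    by_cases hz'D : z' ∈ D
    · obtain ⟨m, hm, hcm⟩ := ih z' hz'D hc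
      exact ⟨m, by omega, hcm⟩
    · rcases hD z' hz' z hz hadj.symm hzD with h | h
      · exact absurd h hz'D
      · exact ⟨n, by omega, h ▸ hc⟩

/-- avoiding a closed region D attached at x2, towards any target g outside D -/
lemma reach_avoid2 {t D : Finset W} {x2 g : W} (hx2D : x2 ∉ D)
    (hD : ∀ a ∈ t, ∀ b ∈ t, H.Adj a b → b ∈ D → a ∈ D ∨ a = x2) (hg : g ∉ D) :
    ∀ n, ∀ {x}, ChainIn H t n x g → x ∉ D → ReachIn H (t \ D) x g := by
  intro n
  induction n using Nat.strong_induction_on with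
  | _ n ih =>
    intro x hchain hxD
    cases n with
    | zero =>
      obtain ⟨he, hx⟩ := hchain
      subst he
      exact reachIn_refl (Finset.mem_sdiff.mpr ⟨hx, hxD⟩)
    | succ n =>
      obtain ⟨hx, z, hz, hadj, hc⟩ := hchain
      by_cases hzD : z ∈ D
      · have hxx2 : x = x2 := by
          rcases hD x hx z hz hadj hzD with h | h
          · exact absurd h hxD
          · exact h
        obtain ⟨m, hm, hcm⟩ := exitD hD hg n z hzD hc
        exact hxx2 ▸ ih m (by omega) hcm hx2D
      · exact reachIn_trans
          (reachIn_step (Finset.mem_sdiff.mpr ⟨hx, hxD⟩)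
            (Finset.mem_sdiff.mpr ⟨hz, hzD⟩) hadj)
          (ih n (by omega) hc hzD)

/-- an end pair: D is a proper component of t.erase z -/
def EndPair (H : SimpleGraph W) (t : Finset W) (z : W) (D : Finset W) : Prop :=
  z ∈ t ∧ D.Nonempty ∧ D ⊆ t.erase z ∧
  (∀ p ∈ D, ∀ q ∈ t.erase z, H.Adj p q → q ∈ D) ∧
  (ConnOn H D) ∧
  (∃ b ∈ t.erase z, b ∉ D)

lemma endPair_of_cmp {t : Finset W} {z a b : W} (hz : z ∈ t) (ha : a ∈ t.erase z)
    (hb : b ∈ t.erase z) (hnr : ¬ ReachIn H (t.erase z) a b) :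
    EndPair H t z (Cmp H (t.erase z) a) := by
  refine ⟨hz, ⟨a, self_mem_Cmp ha⟩, Cmp_subset, ?_, connOn_Cmp ha, b, hb, ?_⟩
  · intro p hp q hq hadj
    exact Cmp_closed hp hq hadj
  · intro hbC
    exact hnr (mem_Cmp.mp hbC).2

namespace EndPair

variable {t D : Finset W} {z : W}

lemma z_mem (h : EndPair H t z D) : z ∈ t := h.1
lemma nonempty (h : EndPair H t z D) : D.Nonempty := h.2.1
lemma subset (h : EndPair H t z D) : D ⊆ t.erase z := h.2.2.1
lemma closed (h : EndPair H t z D) :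
    ∀ p ∈ D, ∀ q ∈ t.erase z, H.Adj p q → q ∈ D := h.2.2.2.1
lemma conn (h : EndPair H t z D) : ConnOn H D := h.2.2.2.2.1
lemma proper (h : EndPair H t z D) : ∃ b ∈ t.erase z, b ∉ D := h.2.2.2.2.2

lemma z_not_mem (h : EndPair H t z D) : z ∉ D :=
  fun hz => (Finset.mem_erase.mp (h.subset hz)).1 rfl

lemma mem_t (h : EndPair H t z D) {p : W} (hp : p ∈ D) : p ∈ t :=
  (Finset.mem_erase.mp (h.subset hp)).2

lemma ne_z (h : EndPair H t z D) {p : W} (hp : p ∈ D) : p ≠ z :=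
  (Finset.mem_erase.mp (h.subset hp)).1

/-- edges leaving D go to z -/
lemma edge_out (h : EndPair H t z D) : ∀ p ∈ D, ∀ q ∈ t, H.Adj p q → q ∈ D ∨ q = z := by
  intro p hp q hq hadj
  by_cases hqz : q = z
  · exact Or.inr hqz
  · exact Or.inl (h.closed p hp q (Finset.mem_erase.mpr ⟨hqz, hq⟩) hadj)

/-- the complement of D is connected to z -/
lemma compl_conn (h : EndPair H t z D) (hconn : ConnOn H t) :
    ∀ y ∈ t \ D, ReachIn H (t \ D) y z := by
  intro y hy
  rw [Finset.mem_sdiff] at hy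
  obtain ⟨n, hn⟩ := hconn y hy.1 z h.z_mem
  refine reach_avoid2 h.z_not_mem ?_ h.z_not_mem n hn hy.2
  intro a ha b hb hadj hbD
  exact h.edge_out b hbD a ha hadj.symm

/-- z has a neighbour in D -/
lemma nbr_in (h : EndPair H t z D) (hconn : ConnOn H t) : ∃ y ∈ D, H.Adj z y := by
  obtain ⟨d, hd⟩ := h.nonempty
  obtain ⟨n, hn⟩ := hconn d (h.mem_t hd) z h.z_mem
  obtain ⟨y, hy1, hy2⟩ := laststep hn (h.ne_z hd)
  refine ⟨y, ?_, hy1⟩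
  obtain ⟨m, hm⟩ := hy2
  exact chain_stay h.closed hm hd

/-- reach stays inside D -/
lemma reach_stay (h : EndPair H t z D) {p q : W} (hp : p ∈ D)
    (hr : ReachIn H (t.erase z) p q) : q ∈ D := by
  obtain ⟨n, hn⟩ := hr
  exact chain_stay h.closed hn hp

/-- z is a cut vertex -/
lemma is_cut (h : EndPair H t z D) : ¬ ConnOn H (t.erase z) := by
  intro hconn
  obtain ⟨d, hd⟩ := h.nonempty
  obtain ⟨b, hb, hbD⟩ := h.proper
  exact hbD (h.reach_stay hd (hconn d (h.subset hd) b hb))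

end EndPair

/-- no vertex of a no-cut end is a cut vertex of t -/
lemma cut_not_in_end {t D : Finset W} {z : W} (hconn : ConnOn H t) (hEP : EndPair H t z D)
    (hnocutB : ∀ y ∈ D ∪ {z}, ConnOn H ((D ∪ {z}).erase y))
    {w' : W} (hw' : w' ∈ D) : ConnOn H (t.erase w') := by
  have hzw : z ≠ w' := fun he => hEP.z_not_mem (he ▸ hw')
  have hz' : z ∈ t.erase w' := Finset.mem_erase.mpr ⟨hzw, hEP.z_mem⟩
  have key : ∀ y ∈ t.erase w', ReachIn H (t.erase w') y z := by
    intro y hy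
    rw [Finset.mem_erase] at hy
    by_cases hyD : y ∈ D
    · have h1 : y ∈ (D ∪ {z}).erase w' :=
        Finset.mem_erase.mpr ⟨hy.1, Finset.mem_union_left _ hyD⟩
      have h2 : z ∈ (D ∪ {z}).erase w' :=
        Finset.mem_erase.mpr ⟨hzw, Finset.mem_union_right _ (Finset.mem_singleton_self z)⟩
      refine reachIn_mono ?_ (hnocutB w' (Finset.mem_union_left _ hw') y h1 z h2)
      intro p hp
      rw [Finset.mem_erase] at hp ⊢
      rcases Finset.mem_union.mp hp.2 with h | h
      · exact ⟨hp.1, hEP.mem_t h⟩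
      · exact ⟨hp.1, (Finset.mem_singleton.mp h) ▸ hEP.z_mem⟩
    · have h1 : y ∈ t \ D := Finset.mem_sdiff.mpr ⟨hy.2, hyD⟩
      refine reachIn_mono ?_ (hEP.compl_conn hconn y h1)
      intro p hp
      rw [Finset.mem_sdiff] at hp
      refine Finset.mem_erase.mpr ⟨?_, hp.1⟩
      intro he
      exact hp.2 (he ▸ hw')
  intro p hp q hq
  exact reachIn_trans (key p hp) (reachIn_symm (key q hq))

/-- minimal end pairs have no cut vertex -/
theorem exists_good_end (t : Finset W) (P : Finset W) :
    ∀ N (z : W) (D : Finset W), EndPair H t z D → Disjoint D P → D.card ≤ N →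
      ∃ z' D', EndPair H t z' D' ∧ Disjoint D' P ∧
        (∀ y ∈ D' ∪ {z'}, ConnOn H ((D' ∪ {z'}).erase y)) := by
  intro N
  induction N with
  | zero =>
    intro z D hEP hdisj hcard
    obtain ⟨d, hd⟩ := hEP.nonempty
    have := Finset.card_pos.mpr ⟨d, hd⟩
    omega
  | succ N ih =>
    intro z D hEP hdisj hcard
    by_cases hnc : ∀ y ∈ D ∪ {z}, ConnOn H ((D ∪ {z}).erase y)
    · exact ⟨z, D, hEP, hdisj, hnc⟩
    · push_neg at hnc
      obtain ⟨y0, hy0B, hy0⟩ := hnc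
      set B := D ∪ {z} with hB
      have hzD := hEP.z_not_mem
      have hBz : B.erase z = D := by
        ext p
        rw [Finset.mem_erase, hB, Finset.mem_union, Finset.mem_singleton]
        constructor
        · rintro ⟨hne, h | h⟩
          · exact h
          · exact absurd h hne
        · intro hp
          exact ⟨hEP.ne_z hp, Or.inl hp⟩
      have hy0z : y0 ≠ z := by
        intro he
        rw [he, hBz] at hy0
        exact hy0 hEP.conn
      have hy0D : y0 ∈ D := by
        rcases Finset.mem_union.mp hy0B with h | h
        · exact h
        · exact absurd (Finset.mem_singleton.mp h) hy0z
      -- find a component of B.erase y0 missing z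
      have hzBe : z ∈ B.erase y0 :=
        Finset.mem_erase.mpr ⟨(Ne.symm hy0z), Finset.mem_union_right _ (Finset.mem_singleton_self z)⟩
      have hex : ∃ e ∈ B.erase y0, ¬ ReachIn H (B.erase y0) e z := by
        by_contra hcon
        push_neg at hcon
        apply hy0
        intro p hp q hq
        exact reachIn_trans (hcon p hp) (reachIn_symm (hcon q hq))
      obtain ⟨e, he, hez⟩ := hex
      have heD : e ∈ D := by
        have heB := (Finset.mem_erase.mp he).2
        rcases Finset.mem_union.mp heB with h | h
        · exact h
        · exact absurd (Finset.mem_singleton.mp h) (fun hh => hez (hh ▸ reachIn_refl he))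
      have hey0 : e ≠ y0 := (Finset.mem_erase.mp he).1
      set E := Cmp H (B.erase y0) e with hE
      have hzE : z ∉ E := by
        intro hzE'
        exact hez (mem_Cmp.mp hzE').2
      have hEsub : E ⊆ D := by
        intro p hp
        have hp' := Cmp_subset hp
        have hpB := (Finset.mem_erase.mp hp').2
        rcases Finset.mem_union.mp hpB with hh | hh
        · exact hh
        · exact absurd ((Finset.mem_singleton.mp hh) ▸ hp) hzE
      -- E is closed in t.erase y0
      have hEclosed : ∀ p ∈ E, ∀ q ∈ t.erase y0, H.Adj p q → q ∈ E := by
        intro p hp q hq hadj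
        have hpD : p ∈ D := hEsub hp
        have hqt := (Finset.mem_erase.mp hq).2
        have hqy0 := (Finset.mem_erase.mp hq).1
        have hqB : q ∈ B := by
          rcases hEP.edge_out p hpD q hqt hadj with hh | hh
          · exact Finset.mem_union_left _ hh
          · exact hh ▸ Finset.mem_union_right _ (Finset.mem_singleton_self z)
        exact Cmp_closed hp (Finset.mem_erase.mpr ⟨hqy0, hqB⟩) hadj
      have hy0t : y0 ∈ t := hEP.mem_t hy0D
      have het : e ∈ t.erase y0 := Finset.mem_erase.mpr ⟨hey0, hEP.mem_t heD⟩
      have hzte : z ∈ t.erase y0 := Finset.mem_erase.mpr ⟨Ne.symm hy0z, hEP.z_mem⟩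
      have hnr : ¬ ReachIn H (t.erase y0) e z := by
        intro hr
        obtain ⟨n, hn⟩ := hr
        exact hzE (chain_stay hEclosed hn (self_mem_Cmp (Finset.mem_erase.mpr ⟨hey0,
          Finset.mem_union_left _ heD⟩)))
      have hEP' : EndPair H t y0 (Cmp H (t.erase y0) e) := endPair_of_cmp hy0t het hzte hnr
      have hD'E : Cmp H (t.erase y0) e ⊆ E := by
        intro p hp
        obtain ⟨n, hn⟩ := (mem_Cmp.mp hp).2
        exact chain_stay hEclosed hn (self_mem_Cmp (Finset.mem_erase.mpr ⟨hey0,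
          Finset.mem_union_left _ heD⟩))
      have hD'D : Cmp H (t.erase y0) e ⊆ D := fun p hp => hEsub (hD'E hp)
      refine ih y0 (Cmp H (t.erase y0) e) hEP' ?_ ?_
      · exact Finset.disjoint_of_subset_left hD'D hdisj
      · have hsub2 : Cmp H (t.erase y0) e ⊆ D.erase y0 := by
          intro p hp
          have : p ≠ y0 := (Finset.mem_erase.mp (Cmp_subset hp)).1
          exact Finset.mem_erase.mpr ⟨this, hD'D hp⟩
        have h1 := Finset.card_le_card hsub2
        have h2 := Finset.card_erase_of_mem hy0D
        have h3 := Finset.card_pos.mpr ⟨y0, hy0D⟩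
        omega

end Components

section LOVsec

variable {W : Type} [Fintype W] [DecidableEq W] {H : SimpleGraph W} [DecidableRel H.Adj]

lemma dist2 (s : Finset W) (hconn : ConnOn H s) {p q : W} (hp : p ∈ s) (hq : q ∈ s)
    (hne : p ≠ q) (hnadj : ¬ H.Adj p q) :
    ∃ m ∈ s, ∃ p' ∈ s, ∃ q' ∈ s, H.Adj m p' ∧ H.Adj m q' ∧ p' ≠ q' ∧ ¬ H.Adj p' q' := by
  have hr := hconn p hp q hq
  have hchain := chainIn_distIn hr
  have hd0 : distIn (H := H) s p q ≠ 0 := by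
    intro h0
    rw [h0] at hchain
    exact hne hchain.1
  have hd1 : distIn (H := H) s p q ≠ 1 := by
    intro h1
    rw [h1] at hchain
    obtain ⟨hp', z, hz, hadj, hc0⟩ := hchain
    obtain ⟨rfl, _⟩ := hc0
    exact hnadj hadj
  obtain ⟨d'', hd''⟩ : ∃ d'', distIn (H := H) s p q = d'' + 2 := by
    refine ⟨distIn (H := H) s p q - 2, ?_⟩
    omega
  rw [hd''] at hchain
  obtain ⟨hp1, z1, hz1, ha1, hc1⟩ := hchain
  obtain ⟨hz1m, z2, hz2, ha2, hc2⟩ := hc1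
  refine ⟨z1, hz1, p, hp, z2, hz2, ha1.symm, ha2, ?_, ?_⟩
  · intro he2
    have hle : distIn (H := H) s p q ≤ d'' := distIn_le (he2 ▸ hc2)
    omega
  · intro hadj2
    have hch : ChainIn H s (d'' + 1) p q := ⟨hp, z2, hz2, hadj2, hc2⟩
    have hle := distIn_le hch
    omega

theorem LOV (s : Finset W) (hconn : ConnOn H s)
    (hnocut : ∀ z ∈ s, ConnOn H (s.erase z))
    (x : W) (hdeg3 : ∀ y ∈ s, y ≠ x → 3 ≤ degOn H s y)
    {p0 q0 : W} (hp0 : p0 ∈ s) (hq0 : q0 ∈ s) (hne0 : p0 ≠ q0) (hnadj0 : ¬ H.Adj p0 q0) :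
    ∃ v ∈ s, ∃ p ∈ s, ∃ q ∈ s, H.Adj v p ∧ H.Adj v q ∧ p ≠ q ∧ ¬ H.Adj p q ∧
      (∀ y ∈ (s.erase p).erase q, ReachIn H ((s.erase p).erase q) y v) := by
  obtain ⟨m, hm, p, hp, q, hq, hmp, hmq, hpq, hpqn⟩ := dist2 s hconn hp0 hq0 hne0 hnadj0
  by_cases hcase : ∀ y ∈ (s.erase p).erase q, ReachIn H ((s.erase p).erase q) y m
  · exact ⟨m, hm, p, hp, q, hq, hmp, hmq, hpq, hpqn, hcase⟩
  -- `q` is a cut vertex of `t := s.erase p`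
  set t := s.erase p with ht
  have htconn : ConnOn H t := hnocut p hp
  have hqt : q ∈ t := Finset.mem_erase.mpr ⟨hpq.symm, hq⟩
  have hmt : m ∈ t.erase q := Finset.mem_erase.mpr ⟨hmq.ne, Finset.mem_erase.mpr ⟨hmp.ne, hm⟩⟩
  have hcut : ¬ ConnOn H (t.erase q) := by
    intro hcc
    exact hcase (fun y hy => hcc y hy m hmt)
  unfold ConnOn at hcut
  push_neg at hcut
  obtain ⟨a, ha, b, hb, hab⟩ := hcut
  have hEPa : EndPair H t q (Cmp H (t.erase q) a) := endPair_of_cmp hqt ha hb hab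
  obtain ⟨x1, C1, hEP1, _, hnc1⟩ := exists_good_end t ∅ (Cmp H (t.erase q) a).card q _
    hEPa (Finset.disjoint_empty_right _) le_rfl
  have hx1t : x1 ∈ t := hEP1.z_mem
  have hx1s : x1 ∈ s := (Finset.mem_erase.mp hx1t).2
  have hx1p : x1 ≠ p := (Finset.mem_erase.mp hx1t).1
  -- second end pair, disjoint from B1 := C1 ∪ {x1}
  have hcut1 := hEP1.is_cut
  unfold ConnOn at hcut1
  push_neg at hcut1
  obtain ⟨a2, ha2, b2, hb2, hab2⟩ := hcut1
  have hnotboth : ¬ (a2 ∈ C1 ∧ b2 ∈ C1) := by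
    rintro ⟨h1, h2⟩
    exact hab2 (reachIn_mono hEP1.subset (hEP1.conn a2 h1 b2 h2))
  obtain ⟨e, he, o, ho, heo, heC⟩ :
      ∃ e, e ∈ t.erase x1 ∧ ∃ o, o ∈ t.erase x1 ∧ ¬ ReachIn H (t.erase x1) e o ∧ e ∉ C1 := by
    by_cases ha2C : a2 ∈ C1
    · refine ⟨b2, hb2, a2, ha2, ?_, ?_⟩
      · intro hre
        exact hab2 (reachIn_symm hre)
      · intro hb2C
        exact hnotboth ⟨ha2C, hb2C⟩
    · exact ⟨a2, ha2, b2, hb2, hab2, ha2C⟩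
  have hEPD0 : EndPair H t x1 (Cmp H (t.erase x1) e) := endPair_of_cmp hx1t he ho heo
  have hdisj0 : Disjoint (Cmp H (t.erase x1) e) (C1 ∪ {x1}) := by
    rw [Finset.disjoint_left]
    intro y hy hyB
    rcases Finset.mem_union.mp hyB with h | h
    · exact heC (hEP1.reach_stay h (reachIn_symm (mem_Cmp.mp hy).2))
    · rw [Finset.mem_singleton.mp h] at hy
      exact (Finset.mem_erase.mp (Cmp_subset hy)).1 rfl
  obtain ⟨x2, D, hEP2, hdisj2, hnc2⟩ := exists_good_end t (C1 ∪ {x1})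
    (Cmp H (t.erase x1) e).card x1 _ hEPD0 hdisj0 le_rfl
  have hx2t : x2 ∈ t := hEP2.z_mem
  have hx2C1 : x2 ∉ C1 := by
    intro hmem
    exact hEP2.is_cut (cut_not_in_end htconn hEP1 hnc1 hmem)
  have hx1D : x1 ∉ D := by
    intro hmem
    exact hEP1.is_cut (cut_not_in_end htconn hEP2 hnc2 hmem)
  have hDC1 : ∀ y ∈ D, y ∉ C1 := by
    intro y hy hyC
    exact (Finset.disjoint_left.mp hdisj2) hy (Finset.mem_union_left _ hyC)
  have hDx1 : ∀ y ∈ D, y ≠ x1 := by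
    intro y hy he'
    exact hx1D (he' ▸ hy)
  -- p has neighbours in C1 and in D
  have hnbr : ∀ (z' : W) (D' : Finset W), EndPair H t z' D' → ∃ y ∈ D', H.Adj p y := by
    intro z' D' hEP'
    by_contra hno
    push_neg at hno
    obtain ⟨c0, hc0⟩ := hEP'.nonempty
    have hz's : z' ∈ s := (Finset.mem_erase.mp hEP'.z_mem).2
    have hcon' := hnocut z' hz's
    have hc0s : c0 ∈ s.erase z' := by
      refine Finset.mem_erase.mpr ⟨hEP'.ne_z hc0, (Finset.mem_erase.mp (hEP'.mem_t hc0)).2⟩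
    have hps : p ∈ s.erase z' := by
      refine Finset.mem_erase.mpr ⟨?_, hp⟩
      intro he'
      exact (Finset.mem_erase.mp hEP'.z_mem).1 he'.symm
    have hreach := hcon' c0 hc0s p hps
    obtain ⟨n, hn⟩ := hreach
    have hstay : p ∈ D' := by
      refine chain_stay ?_ hn hc0
      intro p' hp' q' hq' hadj
      rw [Finset.mem_erase] at hq'
      by_cases hq'p : q' = p
      · exact absurd (hq'p ▸ hadj) (fun hh => hno p' hp' hh.symm)
      · exact hEP'.closed p' hp' q'
          (Finset.mem_erase.mpr ⟨hq'.1, Finset.mem_erase.mpr ⟨hq'p, hq'.2⟩⟩) hadj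
    have : p ∈ t := hEP'.mem_t hstay
    exact (Finset.mem_erase.mp this).1 rfl
  obtain ⟨u1, hu1C, hpu1⟩ := hnbr x1 C1 hEP1
  obtain ⟨u2, hu2D, hpu2⟩ := hnbr x2 D hEP2
  have hu1t : u1 ∈ t := hEP1.mem_t hu1C
  have hu2t : u2 ∈ t := hEP2.mem_t hu2D
  have hu1s : u1 ∈ s := (Finset.mem_erase.mp hu1t).2
  have hu2s : u2 ∈ s := (Finset.mem_erase.mp hu2t).2
  have hu12 : u1 ≠ u2 := by
    intro he'
    exact hDC1 u2 hu2D (he' ▸ hu1C)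
  have hn12 : ¬ H.Adj u1 u2 := by
    intro hadj
    rcases hEP1.edge_out u1 hu1C u2 hu2t hadj with h | h
    · exact hDC1 u2 hu2D h
    · exact hDx1 u2 hu2D h
  by_cases hdegp : 3 ≤ degOn H s p
  · -- v := p, exchange pair (u1, u2)
    have hu1f : u1 ∈ s.filter (fun y => H.Adj p y) := Finset.mem_filter.mpr ⟨hu1s, hpu1⟩
    have hu2f : u2 ∈ (s.filter (fun y => H.Adj p y)).erase u1 :=
      Finset.mem_erase.mpr ⟨hu12.symm, Finset.mem_filter.mpr ⟨hu2s, hpu2⟩⟩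
    have hy3ex : (((s.filter (fun y => H.Adj p y)).erase u1).erase u2).Nonempty := by
      rw [← Finset.card_pos]
      have h1 := Finset.card_erase_of_mem hu2f
      have h2 := Finset.card_erase_of_mem hu1f
      unfold degOn at hdegp
      omega
    obtain ⟨y3, hy3⟩ := hy3ex
    have hy3u2 : y3 ≠ u2 := (Finset.mem_erase.mp hy3).1
    have hy3u1 : y3 ≠ u1 := (Finset.mem_erase.mp (Finset.mem_erase.mp hy3).2).1
    have hy3f := (Finset.mem_erase.mp (Finset.mem_erase.mp hy3).2).2
    have hy3s : y3 ∈ s := (Finset.mem_filter.mp hy3f).1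
    have hpy3 : H.Adj p y3 := (Finset.mem_filter.mp hy3f).2
    have hy3t : y3 ∈ t := Finset.mem_erase.mpr ⟨hpy3.ne', hy3s⟩
    -- the key connectivity of (t.erase u1).erase u2 towards x1
    have hx1u2 : x1 ≠ u2 := fun he' => hx1D (he' ▸ hu2D)
    have hx1u1 : x1 ≠ u1 := fun he' => hEP1.z_not_mem (he' ▸ hu1C)
    have hx2u1 : x2 ≠ u1 := fun he' => hx2C1 (he' ▸ hu1C)
    have hx2u2 : x2 ≠ u2 := fun he' => hEP2.z_not_mem (he' ▸ hu2D)
    have hsub1 : (C1 ∪ {x1}).erase u1 ⊆ (t.erase u1).erase u2 := by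
      intro z hz
      rw [Finset.mem_erase] at hz
      rcases Finset.mem_union.mp hz.2 with h | h
      · exact Finset.mem_erase.mpr ⟨fun he' => hDC1 u2 hu2D (he' ▸ h),
          Finset.mem_erase.mpr ⟨hz.1, hEP1.mem_t h⟩⟩
      · rw [Finset.mem_singleton.mp h]
        exact Finset.mem_erase.mpr ⟨hx1u2, Finset.mem_erase.mpr ⟨hx1u1, hx1t⟩⟩
    have hsub2 : (D ∪ {x2}).erase u2 ⊆ (t.erase u1).erase u2 := by
      intro z hz
      rw [Finset.mem_erase] at hz
      rcases Finset.mem_union.mp hz.2 with h | h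
      · exact Finset.mem_erase.mpr ⟨hz.1,
          Finset.mem_erase.mpr ⟨fun he' => hDC1 z h (he' ▸ hu1C), hEP2.mem_t h⟩⟩
      · rw [Finset.mem_singleton.mp h]
        exact Finset.mem_erase.mpr ⟨hx2u2, Finset.mem_erase.mpr ⟨hx2u1, hx2t⟩⟩
    have hRsub : (t \ C1) \ D ⊆ (t.erase u1).erase u2 := by
      intro z hz
      obtain ⟨hz1, hzD⟩ := Finset.mem_sdiff.mp hz
      obtain ⟨hzt, hzC⟩ := Finset.mem_sdiff.mp hz1
      exact Finset.mem_erase.mpr ⟨fun he' => hzD (he' ▸ hu2D),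
        Finset.mem_erase.mpr ⟨fun he' => hzC (he' ▸ hu1C), hzt⟩⟩
    have hpiece3 : ∀ z ∈ (t \ C1) \ D, ReachIn H ((t \ C1) \ D) z x1 := by
      intro z hz
      obtain ⟨hz1, hzD⟩ := Finset.mem_sdiff.mp hz
      obtain ⟨n, hn⟩ := hEP1.compl_conn htconn z hz1
      refine reach_avoid2 hEP2.z_not_mem ?_ hx1D n hn hzD
      intro a' ha' b' hb' hadj hbD
      exact hEP2.edge_out b' hbD a' (Finset.mem_sdiff.mp ha').1 hadj.symm
    have hx1R : x1 ∈ (t \ C1) \ D :=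
      Finset.mem_sdiff.mpr ⟨Finset.mem_sdiff.mpr ⟨hx1t, hEP1.z_not_mem⟩, hx1D⟩
    have hx2R : x2 ∈ (t \ C1) \ D :=
      Finset.mem_sdiff.mpr ⟨Finset.mem_sdiff.mpr ⟨hx2t, hx2C1⟩, hEP2.z_not_mem⟩
    have hB1conn := hnc1 u1 (Finset.mem_union_left _ hu1C)
    have hB2conn := hnc2 u2 (Finset.mem_union_left _ hu2D)
    have hx1B1e : x1 ∈ (C1 ∪ {x1}).erase u1 :=
      Finset.mem_erase.mpr ⟨hx1u1, Finset.mem_union_right _ (Finset.mem_singleton_self _)⟩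
    have hx2B2e : x2 ∈ (D ∪ {x2}).erase u2 :=
      Finset.mem_erase.mpr ⟨hx2u2, Finset.mem_union_right _ (Finset.mem_singleton_self _)⟩
    have claimT : ∀ y ∈ (t.erase u1).erase u2, ReachIn H ((t.erase u1).erase u2) y x1 := by
      intro y hy
      have hyu2 := (Finset.mem_erase.mp hy).1
      have hyu1 := (Finset.mem_erase.mp (Finset.mem_erase.mp hy).2).1
      have hyt := (Finset.mem_erase.mp (Finset.mem_erase.mp hy).2).2
      by_cases hyC : y ∈ C1
      · exact reachIn_mono hsub1 (hB1conn y
          (Finset.mem_erase.mpr ⟨hyu1, Finset.mem_union_left _ hyC⟩) x1 hx1B1e)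
      · by_cases hyD : y ∈ D
        · refine reachIn_trans (reachIn_mono hsub2 (hB2conn y
            (Finset.mem_erase.mpr ⟨hyu2, Finset.mem_union_left _ hyD⟩) x2 hx2B2e)) ?_
          exact reachIn_mono hRsub (hpiece3 x2 hx2R)
        · exact reachIn_mono hRsub (hpiece3 y
            (Finset.mem_sdiff.mpr ⟨Finset.mem_sdiff.mpr ⟨hyt, hyC⟩, hyD⟩))
    have hsubS : (t.erase u1).erase u2 ⊆ (s.erase u1).erase u2 := by
      intro z hz
      have h1 := Finset.mem_erase.mp hz
      have h2 := Finset.mem_erase.mp h1.2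
      exact Finset.mem_erase.mpr ⟨h1.1,
        Finset.mem_erase.mpr ⟨h2.1, (Finset.mem_erase.mp h2.2).2⟩⟩
    have hpmem : p ∈ (s.erase u1).erase u2 :=
      Finset.mem_erase.mpr ⟨hpu2.ne, Finset.mem_erase.mpr ⟨hpu1.ne, hp⟩⟩
    have hy3m : y3 ∈ (t.erase u1).erase u2 :=
      Finset.mem_erase.mpr ⟨hy3u2, Finset.mem_erase.mpr ⟨hy3u1, hy3t⟩⟩
    have hfinal : ∀ y ∈ (s.erase u1).erase u2, ReachIn H ((s.erase u1).erase u2) y p := by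
      intro y hy
      by_cases hyp : y = p
      · rw [hyp]; exact reachIn_refl hpmem
      · have hyt' : y ∈ (t.erase u1).erase u2 := by
          have h1 := Finset.mem_erase.mp hy
          have h2 := Finset.mem_erase.mp h1.2
          exact Finset.mem_erase.mpr ⟨h1.1, Finset.mem_erase.mpr ⟨h2.1,
            Finset.mem_erase.mpr ⟨hyp, h2.2⟩⟩⟩
        refine reachIn_trans (reachIn_mono hsubS (claimT y hyt')) ?_
        refine reachIn_trans (reachIn_mono hsubS (reachIn_symm (claimT y3 hy3m))) ?_
        exact reachIn_step (hsubS hy3m) hpmem hpy3.symm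
    exact ⟨p, hp, u1, hu1s, u2, hu2s, hpu1, hpu2, hu12, hn12, hfinal⟩
  · -- deg p = 2, so p = x ; move the exchange to u1
    have hpx : p = x := by
      by_contra hne'
      exact hdegp (hdeg3 p hp hne')
    have hsubf : {u1, u2} ⊆ s.filter (fun y => H.Adj p y) := by
      intro z hz
      rcases Finset.mem_insert.mp hz with h | h
      · exact h ▸ Finset.mem_filter.mpr ⟨hu1s, hpu1⟩
      · exact (Finset.mem_singleton.mp h) ▸ Finset.mem_filter.mpr ⟨hu2s, hpu2⟩
    have hcard12 : ({u1, u2} : Finset W).card = 2 := by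
      rw [Finset.card_insert_of_notMem (by simpa using hu12), Finset.card_singleton]
    have hfeq : s.filter (fun y => H.Adj p y) = {u1, u2} := by
      refine (Finset.eq_of_subset_of_card_le hsubf ?_).symm
      rw [hcard12]
      unfold degOn at hdegp
      omega
    have hu1x : u1 ≠ x := by
      intro he'
      exact (Finset.mem_erase.mp hu1t).1 (he'.trans hpx.symm)
    have hdegu1 : 3 ≤ degOn H s u1 := hdeg3 u1 hu1s hu1x
    have hyex : (((s.filter (fun y' => H.Adj u1 y')).erase x1).erase p).Nonempty := by
      rw [← Finset.card_pos]
      have h1 := Finset.pred_card_le_card_erase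
        (s := (s.filter (fun y' => H.Adj u1 y')).erase x1) (a := p)
      have h2 := Finset.pred_card_le_card_erase
        (s := s.filter (fun y' => H.Adj u1 y')) (a := x1)
      unfold degOn at hdegu1
      omega
    obtain ⟨y, hy⟩ := hyex
    have hyp' : y ≠ p := (Finset.mem_erase.mp hy).1
    have hyx1 : y ≠ x1 := (Finset.mem_erase.mp (Finset.mem_erase.mp hy).2).1
    have hyf := (Finset.mem_erase.mp (Finset.mem_erase.mp hy).2).2
    have hys : y ∈ s := (Finset.mem_filter.mp hyf).1
    have hu1y : H.Adj u1 y := (Finset.mem_filter.mp hyf).2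
    have hyt : y ∈ t := Finset.mem_erase.mpr ⟨hyp', hys⟩
    have hyC : y ∈ C1 := by
      rcases hEP1.edge_out u1 hu1C y hyt hu1y with h | h
      · exact h
      · exact absurd h hyx1
    have hnpy : ¬ H.Adj p y := by
      intro hadj
      have : y ∈ s.filter (fun y' => H.Adj p y') := Finset.mem_filter.mpr ⟨hys, hadj⟩
      rw [hfeq] at this
      rcases Finset.mem_insert.mp this with h | h
      · exact hu1y.ne h.symm
      · exact hDC1 u2 hu2D ((Finset.mem_singleton.mp h) ▸ hyC)
    have hpy : p ≠ y := fun he' => hyp' he'.symm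
    have hB1y := hnc1 y (Finset.mem_union_left _ hyC)
    have hu1B : u1 ∈ (C1 ∪ {x1}).erase y :=
      Finset.mem_erase.mpr ⟨hu1y.ne, Finset.mem_union_left _ hu1C⟩
    have hx1B : x1 ∈ (C1 ∪ {x1}).erase y :=
      Finset.mem_erase.mpr ⟨fun he' => hEP1.z_not_mem (he' ▸ hyC),
        Finset.mem_union_right _ (Finset.mem_singleton_self _)⟩
    have hsub1' : (C1 ∪ {x1}).erase y ⊆ t.erase y := by
      intro z hz
      rw [Finset.mem_erase] at hz
      refine Finset.mem_erase.mpr ⟨hz.1, ?_⟩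
      rcases Finset.mem_union.mp hz.2 with h | h
      · exact hEP1.mem_t h
      · exact (Finset.mem_singleton.mp h) ▸ hx1t
    have hsubC : t \ C1 ⊆ t.erase y := by
      intro z hz
      rw [Finset.mem_sdiff] at hz
      exact Finset.mem_erase.mpr ⟨fun he' => hz.2 (he' ▸ hyC), hz.1⟩
    have hkey : ∀ z ∈ t.erase y, ReachIn H (t.erase y) z u1 := by
      intro z hz
      have hzy := (Finset.mem_erase.mp hz).1
      have hzt := (Finset.mem_erase.mp hz).2
      by_cases hzC : z ∈ C1
      · exact reachIn_mono hsub1' (hB1y z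
          (Finset.mem_erase.mpr ⟨hzy, Finset.mem_union_left _ hzC⟩) u1 hu1B)
      · refine reachIn_trans (reachIn_mono hsubC
          (hEP1.compl_conn htconn z (Finset.mem_sdiff.mpr ⟨hzt, hzC⟩))) ?_
        exact reachIn_mono hsub1' (hB1y x1 hx1B u1 hu1B)
    exact ⟨u1, hu1s, p, hp, y, hys, hpu1.symm, hu1y, hpy, hnpy, hkey⟩

end LOVsec

section ThmHsec

variable {W : Type} [Fintype W] [DecidableEq W] {H : SimpleGraph W} [DecidableRel H.Adj]
variable {A : Type} [AddCommGroup A] [DecidableEq A] [Nonempty A]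

theorem thmH (f : W → W → A) (hf : ∀ x y, f x y = - f y x) (k : ℕ) (hk : 3 ≤ k) :
    ∀ (n : ℕ) (s : Finset W) (x : W) (L : W → Finset A), s.card ≤ n → x ∈ s →
      ConnOn H s →
      0 < (L x).card → degOn H s x ≤ (L x).card → degOn H s x ≤ k →
      (∀ y ∈ s, y ≠ x → degOn H s y ≤ k ∧ k ≤ (L y).card) →
      (∀ t : Finset W, t ⊆ s → (∀ p ∈ t, ∀ q ∈ t, p ≠ q → H.Adj p q) → t.card ≤ k) →
      ∃ c : W → A, (∀ v ∈ s, c v ∈ L v) ∧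
        ∀ v ∈ s, ∀ y ∈ s, H.Adj v y → c v - c y ≠ f v y := by
  intro n
  induction n with
  | zero =>
    intro s x L hcard hx _ _ _ _ _ _
    have := Finset.card_pos.mpr ⟨x, hx⟩
    omega
  | succ n ih =>
    intro s x L hcard hx hconn hL0 hLdeg hdegk hother hclq
    classical
    by_cases hslack : ∃ v ∈ s, degOn H s v < (L v).card
    · obtain ⟨v0, hv0, hsl⟩ := hslack
      refine colorG1 hf s L v0 hv0 (fun y hy => hconn y hy v0 hv0) ?_ hsl
      intro y hy
      by_cases hyx : y = x
      · rw [hyx]; exact hLdeg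
      · exact le_trans (hother y hy hyx).1 (hother y hy hyx).2
    · push_neg at hslack
      have htight : ∀ y ∈ s, y ≠ x → degOn H s y = k ∧ (L y).card = k := by
        intro y hy hyx
        have h1 := (hother y hy hyx).1
        have h2 := (hother y hy hyx).2
        have h3 := hslack y hy
        exact ⟨by omega, by omega⟩
      by_cases hcut : ∃ z ∈ s, ¬ ConnOn H (s.erase z)
      · -- CASE: cut vertex x'
        obtain ⟨x', hx's, hncc⟩ := hcut
        unfold ConnOn at hncc
        push_neg at hncc
        obtain ⟨a, ha, b, hb, hab⟩ := hncc
        obtain ⟨D, hEP, hxD⟩ : ∃ D, EndPair H s x' D ∧ x ∉ D := by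
          by_cases hxa : x ∈ Cmp H (s.erase x') a
          · refine ⟨Cmp H (s.erase x') b,
              endPair_of_cmp hx's hb ha (fun h => hab (reachIn_symm h)), ?_⟩
            intro hxb
            exact hab (reachIn_trans (mem_Cmp.mp hxa).2 (reachIn_symm (mem_Cmp.mp hxb).2))
          · exact ⟨Cmp H (s.erase x') a, endPair_of_cmp hx's ha hb hab, hxa⟩
        have hDsub : D ⊆ s := fun y hy => hEP.mem_t hy
        have hx'B : x' ∈ D ∪ {x'} := Finset.mem_union_right _ (Finset.mem_singleton_self _)
        have hx'H1 : x' ∈ s \ D := Finset.mem_sdiff.mpr ⟨hx's, hEP.z_not_mem⟩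
        have hxH1 : x ∈ s \ D := Finset.mem_sdiff.mpr ⟨hx, hxD⟩
        have hBsub : D ∪ {x'} ⊆ s := by
          intro z hz
          rcases Finset.mem_union.mp hz with h | h
          · exact hDsub h
          · exact (Finset.mem_singleton.mp h) ▸ hx's
        have hdegB : ∀ y ∈ D, degOn H (D ∪ {x'}) y = degOn H s y := by
          intro y hy
          unfold degOn
          congr 1
          apply Finset.ext
          intro z
          simp only [Finset.mem_filter]
          constructor
          · rintro ⟨hzB, hadj⟩
            exact ⟨hBsub hzB, hadj⟩
          · rintro ⟨hzs, hadj⟩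
            refine ⟨?_, hadj⟩
            rcases hEP.edge_out y hy z hzs hadj with h | h
            · exact Finset.mem_union_left _ h
            · exact h ▸ hx'B
        have hdegBx' : degOn H (D ∪ {x'}) x' = (D.filter (fun y => H.Adj x' y)).card := by
          unfold degOn
          congr 1
          apply Finset.ext
          intro z
          simp only [Finset.mem_filter]
          constructor
          · rintro ⟨hzB, hadj⟩
            rcases Finset.mem_union.mp hzB with h | h
            · exact ⟨h, hadj⟩
            · exact absurd ((Finset.mem_singleton.mp h) ▸ hadj) (H.loopless.irrefl x')
          · rintro ⟨hzD, hadj⟩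
            exact ⟨Finset.mem_union_left _ hzD, hadj⟩
        have hsUnion : (s \ D) ∪ D = s := Finset.sdiff_union_of_subset hDsub
        have hdisjHD : Disjoint (s \ D) D := Finset.sdiff_disjoint
        have hsplit : degOn H (s \ D) x' + (D.filter (fun y => H.Adj x' y)).card
            = degOn H s x' := by
          unfold degOn
          have hfu : s.filter (fun y => H.Adj x' y) =
              (s \ D).filter (fun y => H.Adj x' y) ∪ D.filter (fun y => H.Adj x' y) := by
            rw [← Finset.filter_union, hsUnion]
          rw [hfu, Finset.card_union_of_disjoint (Finset.disjoint_filter_filter hdisjHD)]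
        have hd2pos : 0 < (D.filter (fun y => H.Adj x' y)).card := by
          obtain ⟨y0, hy0D, hy0adj⟩ := hEP.nbr_in hconn
          exact Finset.card_pos.mpr ⟨y0, Finset.mem_filter.mpr ⟨hy0D, hy0adj⟩⟩
        have hdegsx' : degOn H s x' ≤ k := by
          by_cases hh : x' = x
          · rw [hh]; exact hdegk
          · exact (hother x' hx's hh).1
        have hLx' : degOn H s x' ≤ (L x').card := by
          by_cases hh : x' = x
          · rw [hh]; exact hLdeg
          · have := htight x' hx's hh
            omega
        have hH1conn : ∀ y ∈ s \ D, ReachIn H (s \ D) y x' := hEP.compl_conn hconn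
        set A1 : Finset A := (L x').filter (fun a0 => ∃ c : W → A,
          (∀ v ∈ s \ D, c v ∈ L v) ∧
          (∀ v ∈ s \ D, ∀ y ∈ s \ D, H.Adj v y → c v - c y ≠ f v y) ∧ c x' = a0) with hA1
        have hA1sub : A1 ⊆ L x' := Finset.filter_subset _ _
        have hA1card : (L x').card ≤ degOn H (s \ D) x' + A1.card := by
          by_contra hcon
          push_neg at hcon
          have hsd : (L x' \ A1).card = (L x').card - A1.card :=
            Finset.card_sdiff_of_subset hA1sub
          obtain ⟨T, hTsub, hTcard⟩ := Finset.exists_subset_card_eq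
            (show degOn H (s \ D) x' + 1 ≤ (L x' \ A1).card by omega)
          have hside1 : ∀ y ∈ s \ D, degOn H (s \ D) y ≤ ((Function.update L x' T) y).card := by
            intro y hy
            by_cases hyx' : y = x'
            · rw [hyx', Function.update_self, hTcard]
              omega
            · rw [Function.update_of_ne hyx']
              have hmono : degOn H (s \ D) y ≤ degOn H s y := by
                unfold degOn
                exact Finset.card_le_card (Finset.filter_subset_filter _
                  (Finset.sdiff_subset))
              have hys : y ∈ s := (Finset.mem_sdiff.mp hy).1
              by_cases hyx : y = x
              · rw [hyx] at hmono ⊢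
                omega
              · have h1 := (hother y hys hyx).1
                have h2 := (hother y hys hyx).2
                omega
          have hside2 : degOn H (s \ D) x' < ((Function.update L x' T) x').card := by
            rw [Function.update_self, hTcard]
            omega
          obtain ⟨c, hcL, hcp⟩ := colorG1 hf (s \ D) (Function.update L x' T) x'
            hx'H1 hH1conn hside1 hside2
          have hcx' := hcL x' hx'H1
          rw [Function.update_self] at hcx'
          have hmem := hTsub hcx'
          rw [Finset.mem_sdiff] at hmem
          apply hmem.2
          rw [hA1, Finset.mem_filter]
          refine ⟨hmem.1, c, ?_, ?_, rfl⟩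
          · intro v hv
            by_cases hvx' : v = x'
            · rw [hvx']; exact hmem.1
            · have := hcL v hv
              rwa [Function.update_of_ne hvx'] at this
          · exact hcp
        have hA1d2 : (D.filter (fun y => H.Adj x' y)).card ≤ A1.card := by omega
        have hA1pos : 0 < A1.card := by omega
        -- recursive call on B := D ∪ {x'}
        have hBcard : (D ∪ {x'}).card ≤ n := by
          obtain ⟨b', hb', hb'D⟩ := hEP.proper
          have hb's : b' ∈ s := (Finset.mem_erase.mp hb').2
          have hb'x : b' ≠ x' := (Finset.mem_erase.mp hb').1
          have hssub : D ∪ {x'} ⊂ s := by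
            refine Finset.ssubset_iff_of_subset hBsub |>.mpr ⟨b', hb's, ?_⟩
            intro hbB
            rcases Finset.mem_union.mp hbB with h | h
            · exact hb'D h
            · exact hb'x (Finset.mem_singleton.mp h)
          have := Finset.card_lt_card hssub
          omega
        have hBconn : ConnOn H (D ∪ {x'}) := by
          have hall : ∀ y ∈ D ∪ {x'}, ReachIn H (D ∪ {x'}) y x' := by
            intro y hy
            rcases Finset.mem_union.mp hy with h | h
            · obtain ⟨y0, hy0D, hy0adj⟩ := hEP.nbr_in hconn
              refine reachIn_trans (reachIn_mono (fun z hz => Finset.mem_union_left _ hz)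
                (hEP.conn y h y0 hy0D)) ?_
              exact reachIn_step (Finset.mem_union_left _ hy0D) hx'B hy0adj.symm
            · rw [Finset.mem_singleton.mp h]
              exact reachIn_refl hx'B
          intro p hp q hq
          exact reachIn_trans (hall p hp) (reachIn_symm (hall q hq))
        have hoth : ∀ y ∈ D ∪ {x'}, y ≠ x' →
            degOn H (D ∪ {x'}) y ≤ k ∧ k ≤ ((Function.update L x' A1) y).card := by
          intro y hy hyx'
          have hyD : y ∈ D := by
            rcases Finset.mem_union.mp hy with h | h
            · exact h
            · exact absurd (Finset.mem_singleton.mp h) hyx'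
          have hys : y ∈ s := hDsub hyD
          have hyx : y ≠ x := fun he => hxD (he ▸ hyD)
          rw [Function.update_of_ne hyx', hdegB y hyD]
          exact hother y hys hyx
        obtain ⟨cB, hcBL, hcBp⟩ := ih (D ∪ {x'}) x' (Function.update L x' A1) hBcard hx'B
          hBconn (by rw [Function.update_self]; exact hA1pos)
          (by rw [Function.update_self, hdegBx']; exact hA1d2)
          (by rw [hdegBx']; omega)
          hoth (fun t hts hclq' => hclq t (le_trans hts hBsub : t ⊆ s) hclq')
        -- extract the H1 coloring and glue
        · have hcBx' := hcBL x' hx'B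
          rw [Function.update_self, hA1, Finset.mem_filter] at hcBx'
          obtain ⟨hcx'L, c1, hc1L, hc1p, hc1x'⟩ := hcBx'
          refine ⟨fun y => if y ∈ D then cB y else c1 y, ?_, ?_⟩
          · intro v hv
            by_cases hvD : v ∈ D
            · simp only [if_pos hvD]
              have := hcBL v (Finset.mem_union_left _ hvD)
              rwa [Function.update_of_ne (hEP.ne_z hvD)] at this
            · simp only [if_neg hvD]
              exact hc1L v (Finset.mem_sdiff.mpr ⟨hv, hvD⟩)
          · intro v hv y hy hadj
            by_cases hvD : v ∈ D <;> by_cases hyD : y ∈ D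
            · simp only [if_pos hvD, if_pos hyD]
              exact hcBp v (Finset.mem_union_left _ hvD) y (Finset.mem_union_left _ hyD) hadj
            · have hyx' : y = x' := by
                rcases hEP.edge_out v hvD y hy hadj with h | h
                · exact absurd h hyD
                · exact h
              simp only [if_pos hvD, if_neg hyD]
              rw [hyx', hc1x']
              exact hcBp v (Finset.mem_union_left _ hvD) x' hx'B (hyx' ▸ hadj)
            · have hvx' : v = x' := by
                rcases hEP.edge_out y hyD v hv hadj.symm with h | h
                · exact absurd h hvD
                · exact h
              simp only [if_neg hvD, if_pos hyD]
              rw [hvx', hc1x']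
              exact hcBp x' hx'B y (Finset.mem_union_left _ hyD) (hvx' ▸ hadj)
            · simp only [if_neg hvD, if_neg hyD]
              exact hc1p v (Finset.mem_sdiff.mpr ⟨hv, hvD⟩) y
                (Finset.mem_sdiff.mpr ⟨hy, hyD⟩) hadj
      · -- CASE: no cut vertex, use LOV + exchange
        push_neg at hcut
        have hy0 : ∃ y ∈ s, y ≠ x := by
          by_contra hcon
          push_neg at hcon
          have hd0 : degOn H s x = 0 := by
            unfold degOn
            rw [Finset.card_eq_zero, Finset.eq_empty_iff_forall_notMem]
            intro z hz
            rw [Finset.mem_filter] at hz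
            exact H.loopless.irrefl x ((hcon z hz.1) ▸ hz.2)
          have := hslack x hx
          omega
        obtain ⟨y0, hy0s, hy0x⟩ := hy0
        have hpair : ∃ p ∈ s, ∃ q ∈ s, p ≠ q ∧ ¬ H.Adj p q := by
          by_contra hcon
          push_neg at hcon
          have hclqS := hclq s Finset.Subset.rfl hcon
          have hdegy0 : degOn H s y0 = s.card - 1 := by
            unfold degOn
            rw [show s.filter (fun y => H.Adj y0 y) = s.erase y0 from ?_]
            · exact Finset.card_erase_of_mem hy0s
            · apply Finset.ext
              intro z
              rw [Finset.mem_filter, Finset.mem_erase]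
              constructor
              · rintro ⟨hzs, hadj⟩
                exact ⟨hadj.ne', hzs⟩
              · rintro ⟨hzne, hzs⟩
                exact ⟨hzs, hcon y0 hy0s z hzs hzne.symm⟩
          have h1 := (htight y0 hy0s hy0x).1
          have h2 := Finset.card_pos.mpr ⟨x, hx⟩
          omega
        obtain ⟨pp, hpp, qq, hqq, hne0, hnadj0⟩ := hpair
        obtain ⟨v, hv, p, hps, q, hqs, hvp, hvq, hpqne, hpqn, hconn2⟩ :=
          LOV s hconn hcut x
            (fun y hy hyx => by rw [(htight y hy hyx).1]; exact hk)
            hpp hqq hne0 hnadj0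
        have hLle : ∀ y ∈ s, (L y).card ≤ k := by
          intro y hy
          by_cases hyx : y = x
          · rw [hyx]
            have := hslack x hx
            omega
          · exact le_of_eq (htight y hy hyx).2
        have hLposadj : ∀ y ∈ s, H.Adj v y → 0 < (L y).card := by
          intro y hy hadj
          by_cases hyx : y = x
          · rw [hyx]; exact hL0
          · rw [(htight y hy hyx).2]; omega
        refine colorEXCH hf s L p q v hps hqs hv hpqne hvp hvq hpqn hconn2 ?_ ?_
        · intro y hy
          by_cases hyx : y = x
          · rw [hyx]; exact hLdeg
          · exact le_trans (hother y hy hyx).1 (hother y hy hyx).2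
        · have hLv := hLle v hv
          have hp0 := hLposadj p hps hvp
          have hq0 := hLposadj q hqs hvq
          by_cases hpx : p = x
          · have hqx : q ≠ x := fun he => hpqne (hpx.trans he.symm)
            have := (htight q hqs hqx).2
            omega
          · have := (htight p hps hpx).2
            omega

end ThmHsec

section LineGraphApp

variable {V : Type} [Fintype V] [DecidableEq V] (G : SimpleGraph V) [DecidableRel G.Adj]

/-- generic: bounded degree + no (k+1)-clique implies k-group-choosability -/
theorem groupChoosable_of_deg_clique {W : Type} [Fintype W] [DecidableEq W]
    (H : SimpleGraph W) (k : ℕ) (hk : 3 ≤ k)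
    (hdeg : ∀ (inst : DecidableRel H.Adj) (v : W), degOn H Finset.univ v ≤ k)
    (hclq : ∀ t : Finset W, (∀ p ∈ t, ∀ q ∈ t, p ≠ q → H.Adj p q) → t.card ≤ k) :
    GroupChoosable H k := by
  intro A _ _ hcardA L hL f hfanti
  classical
  letI : DecidableRel H.Adj := Classical.decRel _
  have hne : Nonempty A := by
    rw [← Fintype.card_pos_iff]
    omega
  have hfanti' : ∀ x y, f x y = - f y x := hfanti
  -- color each component via thmH
  have hcomp : ∀ v : W, ∃ c : W → A, (∀ y ∈ Cmp H Finset.univ v, c y ∈ L y) ∧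
      ∀ y ∈ Cmp H Finset.univ v, ∀ z ∈ Cmp H Finset.univ v,
        H.Adj y z → c y - c z ≠ f y z := by
    intro v
    have hvmem : v ∈ Cmp H Finset.univ v := self_mem_Cmp (Finset.mem_univ v)
    have hdegC : ∀ y ∈ Cmp H Finset.univ v, degOn H (Cmp H Finset.univ v) y
        = degOn H Finset.univ y := by
      intro y hy
      unfold degOn
      congr 1
      apply Finset.ext
      intro z
      simp only [Finset.mem_filter, Finset.mem_univ, true_and]
      constructor
      · rintro ⟨h1, h2⟩
        exact h2
      · intro h2
        exact ⟨Cmp_closed hy (Finset.mem_univ z) h2, h2⟩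
    refine thmH f hfanti' k hk ((Finset.univ : Finset W).card) (Cmp H Finset.univ v) v L ?_ hvmem
      (connOn_Cmp (Finset.mem_univ v)) ?_ ?_ ?_ ?_ ?_
    · exact Finset.card_le_card (Finset.subset_univ _)
    · rw [hL v]; omega
    · rw [hdegC v hvmem, hL v]; exact hdeg _ v
    · rw [hdegC v hvmem]; exact hdeg _ v
    · intro y hy _
      rw [hdegC y hy, hL y]
      exact ⟨hdeg _ y, le_rfl⟩
    · intro t _ hpw
      exact hclq t hpw
  -- glue the components
  set F : Finset W → (W → A) := fun s =>
    if h : ∃ c : W → A, (∀ y ∈ s, c y ∈ L y) ∧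
        ∀ y ∈ s, ∀ z ∈ s, H.Adj y z → c y - c z ≠ f y z
    then h.choose else (fun _ => Classical.arbitrary A) with hF
  have hFgood : ∀ v : W, (∀ y ∈ Cmp H Finset.univ v, F (Cmp H Finset.univ v) y ∈ L y) ∧
      ∀ y ∈ Cmp H Finset.univ v, ∀ z ∈ Cmp H Finset.univ v,
        H.Adj y z → F (Cmp H Finset.univ v) y - F (Cmp H Finset.univ v) z ≠ f y z := by
    intro v
    rw [hF]
    simp only [dif_pos (hcomp v)]
    exact (hcomp v).choose_spec
  have hCmpCongr : ∀ v w : W, H.Adj v w →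
      Cmp H Finset.univ v = Cmp H Finset.univ w := by
    intro v w hadj
    have hr : ReachIn H Finset.univ v w :=
      reachIn_step (Finset.mem_univ v) (Finset.mem_univ w) hadj
    apply Finset.ext
    intro z
    rw [mem_Cmp, mem_Cmp]
    constructor
    · rintro ⟨h1, h2⟩
      exact ⟨h1, reachIn_trans (reachIn_symm hr) h2⟩
    · rintro ⟨h1, h2⟩
      exact ⟨h1, reachIn_trans hr h2⟩
  refine ⟨fun v => F (Cmp H Finset.univ v) v, ?_, ?_⟩
  · intro v
    exact (hFgood v).1 v (self_mem_Cmp (Finset.mem_univ v))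
  · intro y z hadj
    have hcc := hCmpCongr y z hadj
    have hzy : z ∈ Cmp H Finset.univ y := by
      rw [hcc]; exact self_mem_Cmp (Finset.mem_univ z)
    have hgood := (hFgood y).2 y (self_mem_Cmp (Finset.mem_univ y)) z hzy hadj
    show F (Cmp H Finset.univ y) y - F (Cmp H Finset.univ z) z ≠ f y z
    rw [hcc] at hgood ⊢
    exact hgood

/-- four pairwise intersecting edges have a common vertex -/
lemma common_vertex (t : Finset (↥G.edgeSet)) (h4 : 4 ≤ t.card)
    (hpw : ∀ p ∈ t, ∀ q ∈ t, p ≠ q → (G.lineGraph).Adj p q) :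
    ∃ v : V, ∀ e ∈ t, v ∈ (e : Sym2 V) := by
  classical
  have hne : t.Nonempty := Finset.card_pos.mp (by omega)
  obtain ⟨e1, he1⟩ := hne
  obtain ⟨a, b, hab⟩ : ∃ a b : V, (e1 : Sym2 V) = s(a, b) := by
    induction (e1 : Sym2 V) using Sym2.inductionOn with
    | hf x y => exact ⟨x, y, rfl⟩
  have hadj_ab : G.Adj a b := G.mem_edgeSet.mp (hab ▸ e1.2)
  have hne_ab : a ≠ b := hadj_ab.ne
  have hshare : ∀ e ∈ t, e ≠ e1 → a ∈ (e : Sym2 V) ∨ b ∈ (e : Sym2 V) := by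
    intro e he hnee
    obtain ⟨-, v, hv1, hv2⟩ := lineGraph_adj_iff_exists.mp (hpw e1 he1 e he hnee.symm)
    rw [hab, Sym2.mem_iff] at hv1
    rcases hv1 with h | h
    · exact Or.inl (h ▸ hv2)
    · exact Or.inr (h ▸ hv2)
  by_cases hall_a : ∀ e ∈ t, a ∈ (e : Sym2 V)
  · exact ⟨a, hall_a⟩
  by_cases hall_b : ∀ e ∈ t, b ∈ (e : Sym2 V)
  · exact ⟨b, hall_b⟩
  exfalso
  push_neg at hall_a hall_b
  obtain ⟨e2, he2, ha2⟩ := hall_a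
  obtain ⟨e3, he3, hb3⟩ := hall_b
  have he2ne1 : e2 ≠ e1 := by
    intro he'
    exact ha2 (by rw [he', hab]; exact Sym2.mem_mk_left a b)
  have he3ne1 : e3 ≠ e1 := by
    intro he'
    exact hb3 (by rw [he', hab]; exact Sym2.mem_mk_right a b)
  have hb2 : b ∈ (e2 : Sym2 V) := by
    rcases hshare e2 he2 he2ne1 with h | h
    · exact absurd h ha2
    · exact h
  have ha3 : a ∈ (e3 : Sym2 V) := by
    rcases hshare e3 he3 he3ne1 with h | h
    · exact h
    · exact absurd h hb3
  -- e2 = s(b, c), e3 = s(a, d)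
  set c := Sym2.Mem.other' hb2 with hc
  have hce2 : (e2 : Sym2 V) = s(b, c) := (Sym2.other_spec' hb2).symm
  set d := Sym2.Mem.other' ha3 with hd
  have hde3 : (e3 : Sym2 V) = s(a, d) := (Sym2.other_spec' ha3).symm
  have hca : c ≠ a := by
    intro he'
    exact ha2 (by rw [hce2, he']; exact Sym2.mem_mk_right b a)
  have hdb : d ≠ b := by
    intro he'
    exact hb3 (by rw [hde3, he']; exact Sym2.mem_mk_right a b)
  have he23 : e2 ≠ e3 := by
    intro he'
    exact ha2 (by rw [he']; exact ha3)
  -- common vertex of e2 and e3 forces c = d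
  have hcd : c = d := by
    obtain ⟨-, v, hv2, hv3⟩ := lineGraph_adj_iff_exists.mp (hpw e2 he2 e3 he3 he23)
    rw [hce2, Sym2.mem_iff] at hv2
    rw [hde3, Sym2.mem_iff] at hv3
    rcases hv2 with h2 | h2 <;> rcases hv3 with h3 | h3
    · exact absurd (h2 ▸ h3 : b = a) (Ne.symm hne_ab)
    · exact absurd (h3 ▸ h2 : d = b)  hdb
    · exact absurd (h2.symm.trans h3 : c = a) hca
    · exact h2.symm.trans h3
  -- pick a fourth edge
  have hsub : {e1, e2, e3} ⊆ t := by
    intro z hz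
    rcases Finset.mem_insert.mp hz with h | h
    · exact h ▸ he1
    rcases Finset.mem_insert.mp h with h' | h'
    · exact h' ▸ he2
    · exact (Finset.mem_singleton.mp h') ▸ he3
  have hcard3 : ({e1, e2, e3} : Finset ↥G.edgeSet).card ≤ 3 := by
    apply le_trans (Finset.card_insert_le _ _)
    have := Finset.card_insert_le e2 ({e3} : Finset ↥G.edgeSet)
    simp only [Finset.card_singleton] at this ⊢
    omega
  have hex4 : ∃ e4 ∈ t, e4 ∉ ({e1, e2, e3} : Finset ↥G.edgeSet) := by
    by_contra hcon
    push_neg at hcon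
    have := Finset.card_le_card hcon
    omega
  obtain ⟨e4, he4, he4n⟩ := hex4
  simp only [Finset.mem_insert, Finset.mem_singleton] at he4n
  push_neg at he4n
  obtain ⟨hn1, hn2, hn3⟩ := he4n
  -- e4 shares with e1 : contains a or b
  have hbc : b ≠ c := by
    intro he'
    have : G.Adj b c := G.mem_edgeSet.mp (hce2 ▸ e2.2)
    exact this.ne he'
  have had : a ≠ d := by
    intro he'
    have : G.Adj a d := G.mem_edgeSet.mp (hde3 ▸ e3.2)
    exact this.ne he'
  rcases hshare e4 he4 hn1 with h | h
  · -- a ∈ e4 : e4 = s(a,w)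
    set w := Sym2.Mem.other' h with hw
    have hwe4 : (e4 : Sym2 V) = s(a, w) := (Sym2.other_spec' h).symm
    obtain ⟨-, v, hv4, hv2⟩ := lineGraph_adj_iff_exists.mp (hpw e4 he4 e2 he2
      (fun he' => hn2 he'))
    rw [hwe4, Sym2.mem_iff] at hv4
    rw [hce2, Sym2.mem_iff] at hv2
    have hwval : w = b ∨ w = c := by
      rcases hv4 with h4 | h4 <;> rcases hv2 with h2 | h2
      · exact absurd (h4 ▸ h2 : a = b) hne_ab
      · exact absurd (h4 ▸ h2 : a = c) (Ne.symm hca)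
      · exact Or.inl (h4.symm.trans h2)
      · exact Or.inr (h4.symm.trans h2)
    rcases hwval with hwb | hwc
    · exact hn1 (Subtype.ext (by rw [hwe4, hwb, hab]))
    · exact hn3 (Subtype.ext (by rw [hwe4, hwc, hde3, hcd]))
  · -- b ∈ e4 : e4 = s(b,w)
    set w := Sym2.Mem.other' h with hw
    have hwe4 : (e4 : Sym2 V) = s(b, w) := (Sym2.other_spec' h).symm
    obtain ⟨-, v, hv4, hv3⟩ := lineGraph_adj_iff_exists.mp (hpw e4 he4 e3 he3
      (fun he' => hn3 he'))
    rw [hwe4, Sym2.mem_iff] at hv4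
    rw [hde3, Sym2.mem_iff] at hv3
    have hwval : w = a ∨ w = d := by
      rcases hv4 with h4 | h4 <;> rcases hv3 with h3 | h3
      · exact absurd (h4 ▸ h3 : b = a) (Ne.symm hne_ab)
      · exact absurd (h4 ▸ h3 : b = d) (Ne.symm hdb)
      · exact Or.inl (h4.symm.trans h3)
      · exact Or.inr (h4.symm.trans h3)
    rcases hwval with hwa | hwd
    · exact hn1 (Subtype.ext (by rw [hwe4, hwa, hab, Sym2.eq_swap]))
    · exact hn2 (Subtype.ext (by rw [hwe4, hwd, hce2, ← hcd, Sym2.eq_swap]))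

end LineGraphApp

section Final

variable {V : Type} [Fintype V] [DecidableEq V] (G : SimpleGraph V) [DecidableRel G.Adj]

lemma card_le_degree_of_common (t : Finset (↥G.edgeSet)) (v : V)
    (hv : ∀ e ∈ t, v ∈ (e : Sym2 V)) : t.card ≤ G.degree v := by
  classical
  have hinj : Set.InjOn (fun e : {x // x ∈ t} => Sym2.Mem.other' (hv e.1 e.2)) t.attach := by
    intro e1 _ e2 _ heq
    have heq' : Sym2.Mem.other' (hv e1.1 e1.2) = Sym2.Mem.other' (hv e2.1 e2.2) := heq
    apply Subtype.ext
    apply Subtype.ext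
    rw [← Sym2.other_spec' (hv e1.1 e1.2), ← Sym2.other_spec' (hv e2.1 e2.2), heq']
  have hsub : t.attach.image (fun e => Sym2.Mem.other' (hv e.1 e.2)) ⊆ G.neighborFinset v := by
    intro w hw
    obtain ⟨e, _, rfl⟩ := Finset.mem_image.mp hw
    rw [SimpleGraph.mem_neighborFinset]
    exact G.mem_edgeSet.mp ((Sym2.other_spec' (hv e.1 e.2)).symm ▸ e.1.2)
  have hdeg : (G.neighborFinset v).card = G.degree v := rfl
  calc t.card = t.attach.card := (Finset.card_attach).symm
    _ = (t.attach.image (fun e => Sym2.Mem.other' (hv e.1 e.2))).card :=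
      (Finset.card_image_of_injOn hinj).symm
    _ ≤ (G.neighborFinset v).card := Finset.card_le_card hsub
    _ = G.degree v := hdeg

lemma line_deg_bound (d : ℕ) (hd : ∀ v : V, G.degree v ≤ d)
    (inst : DecidableRel (G.lineGraph).Adj) (e : ↥G.edgeSet) :
    degOn (G.lineGraph) Finset.univ e ≤ 2 * d - 2 := by
  classical
  obtain ⟨a, b, hab⟩ : ∃ a b : V, (e : Sym2 V) = s(a, b) := by
    induction (e : Sym2 V) using Sym2.inductionOn with
    | hf x y => exact ⟨x, y, rfl⟩
  have hadj_ab : G.Adj a b := G.mem_edgeSet.mp (hab ▸ e.2)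
  have hsub : (Finset.univ.filter (fun y => (G.lineGraph).Adj e y)).image (Subtype.val) ⊆
      ((G.neighborFinset a).erase b).image (fun w => s(a, w)) ∪
      ((G.neighborFinset b).erase a).image (fun w => s(b, w)) := by
    intro z hz
    obtain ⟨e2, he2, rfl⟩ := Finset.mem_image.mp hz
    have hadj2 := (Finset.mem_filter.mp he2).2
    obtain ⟨hne, v, hv1, hv2⟩ := lineGraph_adj_iff_exists.mp hadj2
    rw [hab, Sym2.mem_iff] at hv1
    rcases hv1 with rfl | rfl
    · have hspec : s(v, Sym2.Mem.other' hv2) = (e2 : Sym2 V) := Sym2.other_spec' hv2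
      apply Finset.mem_union_left
      apply Finset.mem_image.mpr
      refine ⟨Sym2.Mem.other' hv2, Finset.mem_erase.mpr ⟨?_, ?_⟩, hspec⟩
      · intro hwb
        apply hne
        apply Subtype.ext
        rw [hab, ← hspec, hwb]
      · rw [SimpleGraph.mem_neighborFinset]
        exact G.mem_edgeSet.mp (hspec.symm ▸ e2.2)
    · have hspec : s(v, Sym2.Mem.other' hv2) = (e2 : Sym2 V) := Sym2.other_spec' hv2
      apply Finset.mem_union_right
      apply Finset.mem_image.mpr
      refine ⟨Sym2.Mem.other' hv2, Finset.mem_erase.mpr ⟨?_, ?_⟩, hspec⟩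
      · intro hwa
        apply hne
        apply Subtype.ext
        rw [hab, ← hspec, hwa, Sym2.eq_swap]
      · rw [SimpleGraph.mem_neighborFinset]
        exact G.mem_edgeSet.mp (hspec.symm ▸ e2.2)
  have hcard1 : (Finset.univ.filter (fun y => (G.lineGraph).Adj e y)).card =
      ((Finset.univ.filter (fun y => (G.lineGraph).Adj e y)).image Subtype.val).card :=
    (Finset.card_image_of_injective _ Subtype.val_injective).symm
  have h1 : (((G.neighborFinset a).erase b).image (fun w => s(a, w))).card ≤
      G.degree a - 1 := by
    refine le_trans Finset.card_image_le ?_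
    rw [Finset.card_erase_of_mem ((SimpleGraph.mem_neighborFinset _ _ _).mpr hadj_ab)]
    exact le_rfl
  have h2 : (((G.neighborFinset b).erase a).image (fun w => s(b, w))).card ≤
      G.degree b - 1 := by
    refine le_trans Finset.card_image_le ?_
    rw [Finset.card_erase_of_mem ((SimpleGraph.mem_neighborFinset _ _ _).mpr hadj_ab.symm)]
    exact le_rfl
  have hda := hd a
  have hdb := hd b
  have hda1 : 1 ≤ G.degree a :=
    Finset.card_pos.mpr ⟨b, (SimpleGraph.mem_neighborFinset _ _ _).mpr hadj_ab⟩
  have hdb1 : 1 ≤ G.degree b :=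
    Finset.card_pos.mpr ⟨a, (SimpleGraph.mem_neighborFinset _ _ _).mpr hadj_ab.symm⟩
  have hun := Finset.card_union_le
    (((G.neighborFinset a).erase b).image (fun w => s(a, w)))
    (((G.neighborFinset b).erase a).image (fun w => s(b, w)))
  have hle := Finset.card_le_card hsub
  unfold degOn
  omega

lemma lineGraph_no_adj (h1 : G.maxDegree ≤ 1) :
    ∀ e1 e2 : ↥G.edgeSet, ¬ (G.lineGraph).Adj e1 e2 := by
  intro e1 e2 hadj
  obtain ⟨hne, v, hv1, hv2⟩ := lineGraph_adj_iff_exists.mp hadj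
  have hs1 : s(v, Sym2.Mem.other' hv1) = (e1 : Sym2 V) := Sym2.other_spec' hv1
  have hs2 : s(v, Sym2.Mem.other' hv2) = (e2 : Sym2 V) := Sym2.other_spec' hv2
  have hw12 : Sym2.Mem.other' hv1 ≠ Sym2.Mem.other' hv2 := by
    intro he
    exact hne (Subtype.ext (by rw [← hs1, ← hs2, he]))
  have hadj1 : G.Adj v (Sym2.Mem.other' hv1) := G.mem_edgeSet.mp (hs1.symm ▸ e1.2)
  have hadj2 : G.Adj v (Sym2.Mem.other' hv2) := G.mem_edgeSet.mp (hs2.symm ▸ e2.2)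
  have hsub : {Sym2.Mem.other' hv1, Sym2.Mem.other' hv2} ⊆ G.neighborFinset v := by
    intro z hz
    rcases Finset.mem_insert.mp hz with h | h
    · exact h ▸ (SimpleGraph.mem_neighborFinset _ _ _).mpr hadj1
    · exact (Finset.mem_singleton.mp h) ▸ (SimpleGraph.mem_neighborFinset _ _ _).mpr hadj2
  have hc2 : ({Sym2.Mem.other' hv1, Sym2.Mem.other' hv2} : Finset V).card = 2 := by
    rw [Finset.card_insert_of_notMem (by simpa using hw12), Finset.card_singleton]
  have hd := G.degree_le_maxDegree v
  have hd2 : 2 ≤ G.degree v := by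
    rw [← hc2]
    exact Finset.card_le_card hsub
  omega

/-- If `Δ(G) ≤ 3` then `G` is edge-`(Δ(G)+1)`-group choosable; if `Δ(G) = 4` then `G` is
edge-6-group choosable. -/
theorem stmt {V : Type} [Fintype V] [DecidableEq V] (G : SimpleGraph V) [DecidableRel G.Adj] :
    (G.maxDegree ≤ 3 → EdgeGroupChoosable G (G.maxDegree + 1)) ∧
      (G.maxDegree = 4 → EdgeGroupChoosable G 6) := by
  constructor
  · intro hΔ
    by_cases h1 : G.maxDegree ≤ 1
    · intro A _ _ hcardA L hL f hfanti
      have hnon : ∀ v : ↥G.edgeSet, (L v).Nonempty := by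
        intro v
        apply Finset.card_pos.mp
        rw [hL v]
        omega
      refine ⟨fun v => (hnon v).choose, fun v => (hnon v).choose_spec, ?_⟩
      intro x y hadj
      exact absurd hadj (lineGraph_no_adj G h1 x y)
    · apply groupChoosable_of_deg_clique
      · omega
      · intro inst e
        have hb := line_deg_bound G G.maxDegree (fun v => G.degree_le_maxDegree v) inst e
        omega
      · intro t hpw
        by_cases h4 : 4 ≤ t.card
        · obtain ⟨v, hv⟩ := common_vertex G t h4 hpw
          have hc := card_le_degree_of_common G t v hv
          have hd := G.degree_le_maxDegree v
          omega
        · omega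
  · intro hΔ
    apply groupChoosable_of_deg_clique
    · omega
    · intro inst e
      have hb := line_deg_bound G 4 (fun v => hΔ ▸ G.degree_le_maxDegree v) inst e
      omega
    · intro t hpw
      by_cases h4 : 4 ≤ t.card
      · obtain ⟨v, hv⟩ := common_vertex G t h4 hpw
        have hc := card_le_degree_of_common G t v hv
        have hd := G.degree_le_maxDegree v
        omega
      · omega

end Final
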